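/- arXiv:1610.02737 — 8 statements merged into one kernel-verified Lean document; each statement's English description precedes it below -/
import Mathlib

section
/- Let P and Q be nonempty compact convex sets in ℝⁿ and let C = P + Q (Minkowski sum). Then for every nonempty face F of C there exist a face F_P of P and a face F_Q of Q such that F = F_P + F_Q. -/
open Pointwise

/-- `F` is a face of the convex set `C`: a convex subset that is extreme in `C`. -/
def IsFace {n : ℕ} (C F : Set (EuclideanSpace ℝ (Fin n))) : Prop :=
  Convex ℝ F ∧ IsExtreme ℝ C F

theorem minkowski_face_decomposition {n : ℕ}
    (P Q : Set (EuclideanSpace ℝ (Fin n)))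
    (hPne : P.Nonempty) (hQne : Q.Nonempty)
    (hPc : IsCompact P) (hQc : IsCompact Q)
    (hPconv : Convex ℝ P) (hQconv : Convex ℝ Q)
    (C : Set (EuclideanSpace ℝ (Fin n))) (hC : C = P + Q)
    (F : Set (EuclideanSpace ℝ (Fin n))) (hF : IsFace C F) (hFne : F.Nonempty) :
    ∃ F_P F_Q : Set (EuclideanSpace ℝ (Fin n)),
      IsFace P F_P ∧ IsFace Q F_Q ∧ F = F_P + F_Q := by
  obtain ⟨hFconv, hFsub, hFext⟩ := hF
  subst hC
  refine ⟨{p | p ∈ P ∧ ∃ q ∈ Q, p + q ∈ F}, {q | q ∈ Q ∧ ∃ p ∈ P, p + q ∈ F}, ?_, ?_, ?_⟩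
  · constructor
    · rintro p1 ⟨hp1, q1, hq1, hf1⟩ p2 ⟨hp2, q2, hq2, hf2⟩ a b ha hb hab
      refine ⟨hPconv hp1 hp2 ha hb hab, a • q1 + b • q2, hQconv hq1 hq2 ha hb hab, ?_⟩
      have := hFconv hf1 hf2 ha hb hab
      have heq : a • (p1 + q1) + b • (p2 + q2)
          = (a • p1 + b • p2) + (a • q1 + b • q2) := by module
      rwa [heq] at this
    · constructor
      · rintro p ⟨hp, -⟩; exact hp
      · rintro a ha b hb p ⟨hp, q, hq, hfq⟩ hseg
        obtain ⟨t1, t2, ht1, ht2, hsum, rfl⟩ := hseg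
        have hseg' : t1 • a + t2 • b + q ∈ openSegment ℝ (a + q) (b + q) := by
          refine ⟨t1, t2, ht1, ht2, hsum, ?_⟩
          have h : t1 • (a + q) + t2 • (b + q) = (t1 • a + t2 • b) + (t1 + t2) • q := by
            module
          rw [h, hsum, one_smul]
        have hmem := hFext (Set.add_mem_add ha hq) (Set.add_mem_add hb hq) hfq hseg'
        exact ⟨ha, q, hq, hmem⟩
  · constructor
    · rintro q1 ⟨hq1, p1, hp1, hf1⟩ q2 ⟨hq2, p2, hp2, hf2⟩ a b ha hb hab
      refine ⟨hQconv hq1 hq2 ha hb hab, a • p1 + b • p2, hPconv hp1 hp2 ha hb hab, ?_⟩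
      have := hFconv hf1 hf2 ha hb hab
      have heq : a • (p1 + q1) + b • (p2 + q2)
          = (a • p1 + b • p2) + (a • q1 + b • q2) := by module
      rwa [heq] at this
    · constructor
      · rintro q ⟨hq, -⟩; exact hq
      · rintro a ha b hb q ⟨hq, p, hp, hfq⟩ hseg
        obtain ⟨t1, t2, ht1, ht2, hsum, rfl⟩ := hseg
        have hseg' : p + (t1 • a + t2 • b) ∈ openSegment ℝ (p + a) (p + b) := by
          refine ⟨t1, t2, ht1, ht2, hsum, ?_⟩
          have h : t1 • (p + a) + t2 • (p + b) = (t1 + t2) • p + (t1 • a + t2 • b) := by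
            module
          rw [h, hsum, one_smul]
        have hmem := hFext (Set.add_mem_add hp ha) (Set.add_mem_add hp hb) hfq hseg'
        exact ⟨ha, p, hp, hmem⟩
  · have key : ∀ p ∈ {p | p ∈ P ∧ ∃ q ∈ Q, p + q ∈ F},
        ∀ q ∈ {q | q ∈ Q ∧ ∃ p ∈ P, p + q ∈ F}, p + q ∈ F := by
      rintro p ⟨hp, q', hq', hpq'⟩ q ⟨hq, p', hp', hp'q⟩
      have hm : (1/2 : ℝ) • (p + q') + (1/2 : ℝ) • (p' + q) ∈ F :=
        hFconv hpq' hp'q (by norm_num) (by norm_num) (by norm_num)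
      have hm2 : (1/2 : ℝ) • (p + q') + (1/2 : ℝ) • (p' + q)
          = (1/2 : ℝ) • (p + q) + (1/2 : ℝ) • (p' + q') := by module
      rw [hm2] at hm
      have hopen : (1/2 : ℝ) • (p + q) + (1/2 : ℝ) • (p' + q')
          ∈ openSegment ℝ (p + q) (p' + q') :=
        ⟨1/2, 1/2, by norm_num, by norm_num, by norm_num, rfl⟩
      exact (hFext (Set.add_mem_add hp hq) (Set.add_mem_add hp' hq') hm hopen)
    ext x
    constructor
    · intro hx
      obtain ⟨p, hp, q, hq, rfl⟩ := hFsub hx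
      exact ⟨p, ⟨hp, q, hq, hx⟩, q, ⟨hq, p, hp, hx⟩, rfl⟩
    · rintro ⟨p, hp, q, hq, rfl⟩
      exact key p hp q hq
end

section
/- Let P and Q be nonempty compact convex sets in ℝⁿ, C = P + Q, and F a nonempty face of C. Define F_P = {x ∈ P : ∃ y ∈ Q, x + y ∈ F}. Then F_P is a face of P. -/
open Pointwise

theorem minkowski_face_component_is_face {n : ℕ}
    (P Q : Set (EuclideanSpace ℝ (Fin n)))
    (hPne : P.Nonempty) (hQne : Q.Nonempty)
    (hPc : IsCompact P) (hQc : IsCompact Q)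
    (hPconv : Convex ℝ P) (hQconv : Convex ℝ Q)
    (C : Set (EuclideanSpace ℝ (Fin n))) (hC : C = P + Q)
    (F : Set (EuclideanSpace ℝ (Fin n))) (hF : IsFace C F) (hFne : F.Nonempty) :
    IsFace P {x ∈ P | ∃ y ∈ Q, x + y ∈ F} := by
  obtain ⟨hFconv, hFext⟩ := hF
  constructor
  · -- convexity
    intro x₁ hx₁ x₂ hx₂ a b ha hb hab
    obtain ⟨hx₁P, y₁, hy₁Q, h₁F⟩ := hx₁
    obtain ⟨hx₂P, y₂, hy₂Q, h₂F⟩ := hx₂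
    refine ⟨hPconv hx₁P hx₂P ha hb hab, a • y₁ + b • y₂,
      hQconv hy₁Q hy₂Q ha hb hab, ?_⟩
    have : (a • x₁ + b • x₂) + (a • y₁ + b • y₂) = a • (x₁ + y₁) + b • (x₂ + y₂) := by
      simp [smul_add]; abel
    rw [this]
    exact hFconv h₁F h₂F ha hb hab
  · constructor
    · intro x hx; exact hx.1
    · intro x₁ hx₁ x₂ hx₂ x hx hseg
      obtain ⟨hxP, y, hyQ, hxyF⟩ := hx
      obtain ⟨a, b, ha, hb, hab, hx⟩ := hseg
      have h1 : x₁ + y ∈ C := by rw [hC]; exact Set.add_mem_add hx₁ hyQ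
      have h2 : x₂ + y ∈ C := by rw [hC]; exact Set.add_mem_add hx₂ hyQ
      have hxy : x + y ∈ openSegment ℝ (x₁ + y) (x₂ + y) := by
        refine ⟨a, b, ha, hb, hab, ?_⟩
        rw [← hx]
        linear_combination (norm := module) hab • y
      have hF1 := hFext.left_mem_of_mem_openSegment h1 h2 hxyF hxy
      exact ⟨hx₁, y, hyQ, hF1⟩
end

section
/- Let P and Q be nonempty compact convex sets in ℝⁿ, C = P + Q, and F a nonempty face of C. Define F_P = {x ∈ P : ∃ y ∈ Q, x + y ∈ F} and F_Q = {y ∈ Q : ∃ x ∈ P, x + y ∈ F}. Then F = F_P + F_Q. -/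
open Pointwise

theorem minkowski_face_eq_sum_of_components {n : ℕ}
    (P Q : Set (EuclideanSpace ℝ (Fin n)))
    (hPne : P.Nonempty) (hQne : Q.Nonempty)
    (hPc : IsCompact P) (hQc : IsCompact Q)
    (hPconv : Convex ℝ P) (hQconv : Convex ℝ Q)
    (C : Set (EuclideanSpace ℝ (Fin n))) (hC : C = P + Q)
    (F : Set (EuclideanSpace ℝ (Fin n))) (hF : IsFace C F) (hFne : F.Nonempty) :
    F = {x ∈ P | ∃ y ∈ Q, x + y ∈ F} + {y ∈ Q | ∃ x ∈ P, x + y ∈ F} := by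
  obtain ⟨hFconv, hFsub, hFext⟩ := hF
  ext z
  constructor
  · intro hz
    have hzC : z ∈ C := hFsub hz
    rw [hC] at hzC
    obtain ⟨x, hx, y, hy, rfl⟩ := hzC
    exact ⟨x, ⟨hx, y, hy, hz⟩, y, ⟨hy, x, hx, hz⟩, rfl⟩
  · rintro ⟨x, ⟨hxP, y', hy'Q, hxy'⟩, y, ⟨hyQ, x', hx'P, hx'y⟩, rfl⟩
    -- midpoint of (x+y') and (x'+y) equals midpoint of (x+y) and (x'+y')
    have hm : (1/2 : ℝ) • (x + y') + (1/2 : ℝ) • (x' + y)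
        = (1/2 : ℝ) • (x + y) + (1/2 : ℝ) • (x' + y') := by
      simp only [smul_add]; abel
    have hmF : (1/2 : ℝ) • (x + y) + (1/2 : ℝ) • (x' + y') ∈ F := by
      rw [← hm]
      exact hFconv hxy' hx'y (by norm_num) (by norm_num) (by norm_num)
    have hxyC : x + y ∈ C := by rw [hC]; exact ⟨x, hxP, y, hyQ, rfl⟩
    have hx'y'C : x' + y' ∈ C := by rw [hC]; exact ⟨x', hx'P, y', hy'Q, rfl⟩
    refine hFext hxyC hx'y'C hmF ?_
    exact ⟨1/2, 1/2, by norm_num, by norm_num, by norm_num, rfl⟩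
end

section
/- Let Q ⊆ ℝᵐ be a nonempty compact convex set, Q' = Q × {0} ⊆ ℝ^{m+1}, B the closed unit ball of ℝ^{m+1}, and e = (0,…,0,1). Then {e} + Q' is a face of B + Q'. -/
open Metric Pointwise RealInnerProductSpace

theorem embedded_set_plus_point_is_face {m : ℕ}
    (Q : Set (EuclideanSpace ℝ (Fin m)))
    (hQne : Q.Nonempty) (hQc : IsCompact Q) (hQconv : Convex ℝ Q)
    (Q' : Set (EuclideanSpace ℝ (Fin (m + 1))))
    (hQ' : Q' = {x | WithLp.toLp 2 (fun i : Fin m => x i.castSucc) ∈ Q ∧ x (Fin.last m) = 0})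
    (e : EuclideanSpace ℝ (Fin (m + 1))) (he : e = EuclideanSpace.single (Fin.last m) 1) :
    IsFace (closedBall 0 1 + Q') ({e} + Q') := by
  have hl : ∀ b q : EuclideanSpace ℝ (Fin (m+1)), (b + q) (Fin.last m) = b (Fin.last m) + q (Fin.last m) := fun _ _ => rfl
  have heF : e (Fin.last m) = 1 := by simp [he, EuclideanSpace.single_apply]
  have hene : ‖e‖ = 1 := by simp [he]
  -- any b in the ball has last coordinate ≤ 1
  have hle : ∀ b : EuclideanSpace ℝ (Fin (m+1)), ‖b‖ ≤ 1 → b (Fin.last m) ≤ 1 := by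
    intro b hb
    have h := real_inner_le_norm (EuclideanSpace.single (Fin.last m) (1:ℝ)) b
    rw [EuclideanSpace.inner_single_left] at h
    simpa using h.trans (by simpa using hb)
  have hkey : ∀ b : EuclideanSpace ℝ (Fin (m+1)), ‖b‖ ≤ 1 → b (Fin.last m) = 1 →
      b = EuclideanSpace.single (Fin.last m) 1 := by
    intro b hb hbF
    have h1 : ⟪EuclideanSpace.single (Fin.last m) (1:ℝ), b⟫ = 1 := by
      rw [EuclideanSpace.inner_single_left]; simp [hbF]
    have hnb : ‖b‖ = 1 := by
      refine le_antisymm hb ?_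
      have := real_inner_le_norm (EuclideanSpace.single (Fin.last m) (1:ℝ)) b
      rw [h1] at this; simpa using this
    exact ((inner_eq_one_iff_of_norm_eq_one (by simpa using hene.symm ▸ (by simp [he] : ‖e‖ = 1)) hnb).mp h1).symm
  -- convexity of Q'
  have hQ'conv : Convex ℝ Q' := by
    rw [hQ']
    intro x hx y hy a b ha hb hab
    refine ⟨hQconv hx.1 hy.1 ha hb hab, ?_⟩
    show a * x (Fin.last m) + b * y (Fin.last m) = 0
    rw [hx.2, hy.2]; ring
  constructor
  · exact (convex_singleton e).add hQ'conv
  constructor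
  · apply Set.add_subset_add_right
    simp only [Set.singleton_subset_iff, mem_closedBall, dist_zero_right]
    rw [hene]
  intro x1 hx1 x2 hx2 x hx hseg
  -- last coordinate facts
  have hlast_le : ∀ y ∈ closedBall (0:EuclideanSpace ℝ (Fin (m+1))) 1 + Q', y (Fin.last m) ≤ 1 := by
    rintro y ⟨b, hb, q, hq, rfl⟩
    show b (Fin.last m) + q (Fin.last m) ≤ 1
    rw [hQ'] at hq
    rw [hq.2, add_zero]
    exact hle b (by simpa [dist_zero_right] using (mem_closedBall.mp hb))
  have hmem : ∀ y ∈ closedBall (0:EuclideanSpace ℝ (Fin (m+1))) 1 + Q',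
      y (Fin.last m) = 1 → y ∈ {e} + Q' := by
    rintro y ⟨b, hb, q, hq, rfl⟩ hy1
    replace hy1 : b (Fin.last m) + q (Fin.last m) = 1 := hy1
    have hq2 : q (Fin.last m) = 0 := by rw [hQ'] at hq; exact hq.2
    rw [hq2, add_zero] at hy1
    have hb1 : ‖b‖ ≤ 1 := by simpa [dist_zero_right] using (mem_closedBall.mp hb)
    have := hkey b hb1 hy1
    exact ⟨e, rfl, q, hq, by rw [this, ← he]⟩
  have hxlast : x (Fin.last m) = 1 := by
    obtain ⟨u, hu, q, hq, rfl⟩ := hx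
    rw [Set.mem_singleton_iff] at hu
    show u (Fin.last m) + q (Fin.last m) = 1
    rw [hu, heF]
    rw [hQ'] at hq
    rw [hq.2, add_zero]
  obtain ⟨a, b, ha, hb, hab, hxe⟩ := hseg
  have hcomb : a * x1 (Fin.last m) + b * x2 (Fin.last m) = 1 := by
    have : (a • x1 + b • x2) (Fin.last m) = x (Fin.last m) := by rw [hxe]
    simpa [hl, PiLp.smul_apply, smul_eq_mul, hxlast] using this
  have h1le := hlast_le x1 hx1
  have h2le := hlast_le x2 hx2
  have h1 : x1 (Fin.last m) = 1 := by nlinarith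
  have h2 : x2 (Fin.last m) = 1 := by nlinarith
  exact hmem x1 hx1 h1
end

section
/- Let Q ⊆ ℝⁿ be a nonempty compact convex set and B the closed unit ball of ℝⁿ. Then every nonempty proper face of C = B + Q is of the form {b} + F_Q where b is a point of the unit sphere and F_Q is a face of Q; in particular, every nonempty proper face of C is a translate of a face of Q. -/
open Metric Pointwise

theorem proper_faces_of_ball_plus_set {n : ℕ}
    (Q : Set (EuclideanSpace ℝ (Fin n)))
    (hQne : Q.Nonempty) (hQc : IsCompact Q) (hQconv : Convex ℝ Q)
    (C : Set (EuclideanSpace ℝ (Fin n))) (hC : C = closedBall 0 1 + Q)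
    (F : Set (EuclideanSpace ℝ (Fin n)))
    (hF : IsFace C F) (hFne : F.Nonempty) (hFproper : F ≠ C) :
    ∃ (b : EuclideanSpace ℝ (Fin n)) (F_Q : Set (EuclideanSpace ℝ (Fin n))),
      ‖b‖ = 1 ∧ IsFace Q F_Q ∧ F = {b} + F_Q := by
  obtain ⟨hFconv, hFsub, hFext⟩ := hF
  -- F is a proper subset of C, get a point of C not in F
  have hssub : ∃ y ∈ C, y ∉ F := by
    by_contra h
    push_neg at h
    exact hFproper (le_antisymm hFsub h)
  obtain ⟨y, hyC, hyF⟩ := hssub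
  -- key: any decomposition x = β + q of a point of F has ‖β‖ = 1
  have no_int : ∀ x ∈ F, ∀ β ∈ closedBall (0 : EuclideanSpace ℝ (Fin n)) 1,
      ∀ q ∈ Q, x = β + q → ‖β‖ = 1 := by
    intro x hx β hβ q hq hxeq
    by_contra hne
    have hβ1 : ‖β‖ < 1 := lt_of_le_of_ne (by simpa using hβ) hne
    set r : ℝ := 1 - ‖β‖ with hr
    have hr0 : 0 < r := by linarith
    have hball : ball x r ⊆ C := by
      intro z hz
      rw [hC]
      refine ⟨z - q, ?_, q, hq, by simp⟩
      simp only [mem_closedBall, dist_zero_right]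
      have : z - q = (z - x) + β := by rw [hxeq]; abel
      rw [this]
      calc ‖z - x + β‖ ≤ ‖z - x‖ + ‖β‖ := norm_add_le _ _
        _ ≤ r + ‖β‖ := by
            have := mem_ball_iff_norm.mp hz
            linarith
        _ = 1 := by rw [hr]; ring
    -- x ≠ y
    have hxy : x ≠ y := fun h => hyF (h ▸ hx)
    have hxy0 : ‖x - y‖ ≠ 0 := by
      simpa [sub_eq_zero] using hxy
    have hxy0' : 0 < ‖x - y‖ := lt_of_le_of_ne (norm_nonneg _) (Ne.symm hxy0)
    set ε : ℝ := r / (2 * ‖x - y‖) with hε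
    have hε0 : 0 < ε := div_pos hr0 (by positivity)
    set z : EuclideanSpace ℝ (Fin n) := x + ε • (x - y) with hzdef
    have hzC : z ∈ C := by
      apply hball
      rw [mem_ball_iff_norm]
      have : z - x = ε • (x - y) := by rw [hzdef]; abel
      rw [this, norm_smul, Real.norm_eq_abs, abs_of_pos hε0, hε]
      rw [div_mul_eq_mul_div, mul_comm 2 ‖x - y‖, ← div_div]
      rw [mul_div_assoc, div_self hxy0, mul_one]
      linarith
    have h1ε : (0:ℝ) < 1 + ε := by linarith
    have hseg : x ∈ openSegment ℝ y z := by
      refine ⟨ε / (1 + ε), 1 / (1 + ε), by positivity, by positivity, ?_, ?_⟩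
      · field_simp; ring
      · rw [hzdef]
        match_scalars <;> field_simp <;> ring
    exact hyF (hFext hyC hzC hx hseg)
  -- get a decomposition of a point of F
  obtain ⟨x₀, hx₀⟩ := hFne
  have hx₀C := hFsub hx₀
  rw [hC] at hx₀C
  obtain ⟨b, hb, q₀, hq₀, hbq₀⟩ := hx₀C
  have hbnorm : ‖b‖ = 1 := no_int x₀ hx₀ b hb q₀ hq₀ hbq₀.symm
  -- uniqueness of the ball component
  have uniq : ∀ x ∈ F, ∀ β ∈ closedBall (0 : EuclideanSpace ℝ (Fin n)) 1,
      ∀ q ∈ Q, x = β + q → β = b := by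
    intro x hx β hβ q hq hxeq
    have hβnorm : ‖β‖ = 1 := no_int x hx β hβ q hq hxeq
    -- midpoint
    have hm : (1/2 : ℝ) • x + (1/2 : ℝ) • x₀ ∈ F :=
      hFconv hx hx₀ (by norm_num) (by norm_num) (by norm_num)
    have hmid : (1/2 : ℝ) • x + (1/2 : ℝ) • x₀
        = ((1/2 : ℝ) • (β + b)) + ((1/2 : ℝ) • (q + q₀)) := by
      rw [hxeq, ← hbq₀]; module
    have hmb : (1/2 : ℝ) • (β + b) ∈ closedBall (0 : EuclideanSpace ℝ (Fin n)) 1 := by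
      simp only [mem_closedBall, dist_zero_right, norm_smul, Real.norm_eq_abs]
      have : ‖β + b‖ ≤ 2 := by
        calc ‖β + b‖ ≤ ‖β‖ + ‖b‖ := norm_add_le _ _
          _ = 2 := by rw [hβnorm, hbnorm]; norm_num
      rw [abs_of_pos (by norm_num : (0:ℝ) < 1/2)]
      linarith
    have hmq : (1/2 : ℝ) • (q + q₀) ∈ Q := by
      have := hQconv hq hq₀ (by norm_num : (0:ℝ) ≤ 1/2) (by norm_num : (0:ℝ) ≤ 1/2)
        (by norm_num)
      simpa [smul_add] using this
    have hmn : ‖(1/2 : ℝ) • (β + b)‖ = 1 :=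
      no_int _ hm _ hmb _ hmq hmid
    have hsum : ‖β + b‖ = 2 := by
      rw [norm_smul, Real.norm_eq_abs, abs_of_pos (by norm_num : (0:ℝ) < 1/2)] at hmn
      linarith
    -- parallelogram law
    have hpar := parallelogram_law_with_norm ℝ β b
    have hdiff : ‖β - b‖ ^ 2 = 0 := by
      have h1 : ‖β + b‖ * ‖β + b‖ = 4 := by rw [hsum]; norm_num
      have h2 : ‖β‖ * ‖β‖ = 1 := by rw [hβnorm]; norm_num
      have h3 : ‖b‖ * ‖b‖ = 1 := by rw [hbnorm]; norm_num
      nlinarith [hpar]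
    have : ‖β - b‖ = 0 := by
      nlinarith [norm_nonneg (β - b)]
    rw [norm_eq_zero, sub_eq_zero] at this
    exact this
  -- define F_Q
  refine ⟨b, {q | q ∈ Q ∧ b + q ∈ F}, hbnorm, ⟨?_, ?_, ?_⟩, ?_⟩
  · -- convexity
    intro q₁ hq₁ q₂ hq₂ a c ha hc hac
    constructor
    · exact hQconv hq₁.1 hq₂.1 ha hc hac
    · have : b + (a • q₁ + c • q₂) = a • (b + q₁) + c • (b + q₂) := by
        match_scalars <;> linarith
      rw [this]
      exact hFconv hq₁.2 hq₂.2 ha hc hac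
  · -- subset
    exact fun q hq => hq.1
  · -- extreme
    intro q₁ hq₁ q₂ hq₂ q hq hseg
    obtain ⟨a, c, ha, hc, hac, habc⟩ := hseg
    have hbq₁ : b + q₁ ∈ C := by
      rw [hC]; exact ⟨b, by simpa using hbnorm.le, q₁, hq₁, rfl⟩
    have hbq₂ : b + q₂ ∈ C := by
      rw [hC]; exact ⟨b, by simpa using hbnorm.le, q₂, hq₂, rfl⟩
    have hbseg : b + q ∈ openSegment ℝ (b + q₁) (b + q₂) := by
      refine ⟨a, c, ha, hc, hac, ?_⟩
      rw [← habc]; match_scalars <;> linarith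
    have := hFext hbq₁ hbq₂ hq.2 hbseg
    exact ⟨hq₁, this⟩
  · -- F = {b} + F_Q
    ext x
    constructor
    · intro hx
      have hxC := hFsub hx
      rw [hC] at hxC
      obtain ⟨β, hβ, q, hq, hβq⟩ := hxC
      have hβb : β = b := uniq x hx β hβ q hq hβq.symm
      rw [hβb] at hβq
      have hβq' : b + q = x := hβq
      exact ⟨b, rfl, q, ⟨hq, by rw [hβq']; exact hx⟩, hβq'⟩
    · rintro ⟨u, hu, q, hq, rfl⟩
      rw [Set.mem_singleton_iff] at hu
      rw [hu]
      exact hq.2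
end

section
/- For any strictly increasing sequence of positive integers d₁ < d₂ < ⋯ < d_k, there exists a compact convex set C ⊆ ℝ^{d_k} such that the set of dimensions of positive-dimensional faces of C is exactly {d₁, d₂, …, d_k}. -/
/-- The dimension of a convex set: the dimension of its affine hull. -/
noncomputable def setDim {n : ℕ} (A : Set (EuclideanSpace ℝ (Fin n))) : ℕ :=
  Module.finrank ℝ (affineSpan ℝ A).direction

open Metric Set

noncomputable section

noncomputable section
variable {n : ℕ}

/-- Projection onto the first `a` coordinates. -/
def projL (n a : ℕ) : EuclideanSpace ℝ (Fin n) →ₗ[ℝ] EuclideanSpace ℝ (Fin n) where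
  toFun x := WithLp.toLp 2 (fun i : Fin n => if (i : ℕ) < a then x i else 0)
  map_add' x y := by ext i; by_cases h : (i:ℕ) < a <;> simp [h]
  map_smul' c x := by ext i; by_cases h : (i:ℕ) < a <;> simp [h]

@[simp] lemma projL_apply (a : ℕ) (x : EuclideanSpace ℝ (Fin n)) (i : Fin n) :
    projL n a x i = if (i : ℕ) < a then x i else 0 := rfl

lemma norm_projL_le (a : ℕ) (x : EuclideanSpace ℝ (Fin n)) : ‖projL n a x‖ ≤ ‖x‖ := by
  rw [EuclideanSpace.norm_eq, EuclideanSpace.norm_eq]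
  apply Real.sqrt_le_sqrt
  apply Finset.sum_le_sum
  intro i _
  by_cases h : (i:ℕ) < a <;> simp [h] <;> positivity

lemma mem_ker_projL {a : ℕ} {x : EuclideanSpace ℝ (Fin n)} :
    x ∈ LinearMap.ker (projL n a) ↔ ∀ i : Fin n, (i : ℕ) < a → x i = 0 := by
  constructor
  · intro h i hi
    have := congrArg (fun v : EuclideanSpace ℝ (Fin n) => v i) (show projL n a x = 0 from h)
    simpa [hi] using this
  · intro h
    ext i
    by_cases hi : (i:ℕ) < a <;> simp [hi, h]

lemma projL_eq_zero_of_le {a a' : ℕ} (hle : a' ≤ a) {x : EuclideanSpace ℝ (Fin n)}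
    (hx : x ∈ LinearMap.ker (projL n a)) : projL n a' x = 0 := by
  rw [mem_ker_projL] at hx
  ext i
  by_cases hi : (i:ℕ) < a' <;> simp [hi]
  exact hx i (lt_of_lt_of_le hi hle)

/-- rank of the kernel of the projection. -/
lemma finrank_ker_projL {a m : ℕ} (h : a + m = n) :
    Module.finrank ℝ (LinearMap.ker (projL n a)) = m := by
  have e : (LinearMap.ker (projL n a)) ≃ₗ[ℝ] (Fin m → ℝ) :=
    { toFun := fun z => fun i => z.1 ⟨a + i, by omega⟩
      map_add' := fun z w => by funext i; rfl
      map_smul' := fun c z => by funext i; rfl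
      invFun := fun f => ⟨WithLp.toLp 2 (fun i : Fin n => if hi : a ≤ (i : ℕ) then f ⟨(i:ℕ) - a, by omega⟩ else 0), by
        rw [mem_ker_projL]
        intro i hi
        simp [Nat.not_le.mpr hi]⟩
      left_inv := fun z => by
        ext i
        by_cases hi : a ≤ (i:ℕ)
        · simp only [hi, dif_pos]
          exact congrArg z.1 (Fin.ext (by simp; omega))
        · simp only [hi, dif_neg]
          exact ((mem_ker_projL).mp z.2 i (by omega)).symm
      right_inv := fun f => by
        funext i
        have : a ≤ a + (i:ℕ) := by omega
        simp only [this, dif_pos]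
        exact congrArg f (Fin.ext (by simp)) }
  rw [e.finrank_eq, Module.finrank_fin_fun]

lemma setDim_of_sandwich {F : Set (EuclideanSpace ℝ (Fin n))} {x : EuclideanSpace ℝ (Fin n)}
    {W : Submodule ℝ (EuclideanSpace ℝ (Fin n))} {ε : ℝ} (hε : 0 < ε)
    (h1 : ∀ w ∈ W, ‖w‖ ≤ ε → x + w ∈ F)
    (h2 : ∀ y ∈ F, y - x ∈ W) :
    setDim F = Module.finrank ℝ W := by
  have hdir : (affineSpan ℝ F).direction = W := by
    apply le_antisymm
    · have hFsub : F ⊆ (AffineSubspace.mk' x W : Set (EuclideanSpace ℝ (Fin n))) := by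
        intro y hy
        rw [AffineSubspace.mem_coe, AffineSubspace.mem_mk']
        exact h2 y hy
      have := affineSpan_le.mpr hFsub
      calc (affineSpan ℝ F).direction ≤ (AffineSubspace.mk' x W).direction :=
            AffineSubspace.direction_le this
        _ = W := AffineSubspace.direction_mk' x W
    · intro w hw
      have hx : x ∈ affineSpan ℝ F := subset_affineSpan ℝ F (by simpa using h1 0 W.zero_mem (by simp [le_of_lt hε]))
      set w' := (ε / (‖w‖ + 1)) • w with hw'def
      have hw'W : w' ∈ W := W.smul_mem _ hw
      have hnw : ‖w'‖ ≤ ε := by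
        rw [hw'def, norm_smul]
        have h1' : (0:ℝ) < ‖w‖ + 1 := by positivity
        rw [Real.norm_eq_abs, abs_of_pos (by positivity)]
        rw [div_mul_eq_mul_div, div_le_iff₀ h1']
        nlinarith [norm_nonneg w]
      have hxw : x + w' ∈ affineSpan ℝ F := subset_affineSpan ℝ F (h1 w' hw'W hnw)
      have hmem : w' ∈ (affineSpan ℝ F).direction := by
        have := AffineSubspace.vsub_mem_direction hxw hx
        simpa using this
      have : ((‖w‖ + 1) / ε) • w' ∈ (affineSpan ℝ F).direction :=
        Submodule.smul_mem _ _ hmem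
      have heq : ((‖w‖ + 1) / ε) • w' = w := by
        rw [hw'def, smul_smul, div_mul_div_comm, mul_comm]
        rw [div_self (by positivity), one_smul]
      rwa [heq] at this
  rw [setDim, hdir]

lemma setDim_subsingleton {F : Set (EuclideanSpace ℝ (Fin n))} (h : F.Subsingleton) :
    setDim F = 0 := by
  rcases h.eq_empty_or_singleton with rfl | ⟨x, rfl⟩
  · simp [setDim]
  · rw [setDim, direction_affineSpan]
    simp [vectorSpan_singleton]

/-- slice of a set by a sphere-level of a projection is extreme. -/
lemma isExtreme_slice {C : Set (EuclideanSpace ℝ (Fin n))} {a : ℕ} {ρ : ℝ} (hρ : 0 < ρ)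
    (hC : ∀ y ∈ C, ‖projL n a y‖ ≤ ρ) {u : EuclideanSpace ℝ (Fin n)} (hu : ‖u‖ = ρ) :
    IsExtreme ℝ C {y ∈ C | projL n a y = u} := by
  constructor
  · exact fun y hy => hy.1
  · rintro x₁ hx₁ x₂ hx₂ x ⟨hxC, hxu⟩ hseg
    obtain ⟨s, t, hs, ht, hst, hx⟩ := hseg
    have hPseg : projL n a x ∈ openSegment ℝ (projL n a x₁) (projL n a x₂) := by
      refine ⟨s, t, hs, ht, hst, ?_⟩
      rw [← hx]; simp [map_add, map_smul]
    by_cases hne : projL n a x₁ = projL n a x₂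
    · rw [hne, openSegment_same] at hPseg
      simp only [Set.mem_singleton_iff] at hPseg
      have h2 : projL n a x₂ = u := by rw [← hPseg, hxu]
      exact ⟨hx₁, hne.trans h2⟩
    · exfalso
      have hmem1 : projL n a x₁ ∈ closedBall (0 : EuclideanSpace ℝ (Fin n)) ρ := by
        simpa using hC x₁ hx₁
      have hmem2 : projL n a x₂ ∈ closedBall (0 : EuclideanSpace ℝ (Fin n)) ρ := by
        simpa using hC x₂ hx₂
      have := (strictConvex_closedBall ℝ (0 : EuclideanSpace ℝ (Fin n)) ρ).openSegment_subset
        hmem1 hmem2 hne hPseg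
      rw [interior_closedBall _ (ne_of_gt hρ)] at this
      simp only [mem_ball, dist_zero_right] at this
      rw [hxu, hu] at this
      exact lt_irrefl _ this

/-- averaging: strict bound if one strict. -/
lemma avg_norm_lt {N : ℕ} (hN : 0 < N) (L : EuclideanSpace ℝ (Fin n) →ₗ[ℝ] EuclideanSpace ℝ (Fin n))
    (t : Fin N → EuclideanSpace ℝ (Fin n)) {b : ℝ}
    (hle : ∀ i, ‖L (t i)‖ ≤ b) (i₀ : Fin N) (hlt : ‖L (t i₀)‖ < b) :
    ‖L ((N:ℝ)⁻¹ • ∑ i, t i)‖ < b := by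
  rw [map_smul, norm_smul, map_sum]
  have hsum : ∑ i, ‖L (t i)‖ < N * b := by
    calc ∑ i, ‖L (t i)‖ < ∑ _i : Fin N, b := by
          apply Finset.sum_lt_sum (fun i _ => hle i) ⟨i₀, Finset.mem_univ _, hlt⟩
      _ = N * b := by simp [Finset.sum_const, mul_comm]
  have hNpos : (0:ℝ) < N := by exact_mod_cast hN
  calc ‖((N:ℝ)⁻¹)‖ * ‖∑ i, L (t i)‖ ≤ (N:ℝ)⁻¹ * ∑ i, ‖L (t i)‖ := by
        rw [Real.norm_eq_abs, abs_of_pos (by positivity)]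
        exact mul_le_mul_of_nonneg_left (norm_sum_le _ _) (by positivity)
    _ < (N:ℝ)⁻¹ * (N * b) := by
        exact mul_lt_mul_of_pos_left hsum (by positivity)
    _ = b := by field_simp

lemma combo_norm_le (L : EuclideanSpace ℝ (Fin n) →ₗ[ℝ] EuclideanSpace ℝ (Fin n))
    {x y : EuclideanSpace ℝ (Fin n)} {s t b : ℝ}
    (hx : ‖L x‖ ≤ b) (hy : ‖L y‖ ≤ b) (hs : 0 ≤ s) (ht : 0 ≤ t) (hst : s + t = 1) :
    ‖L (s • x + t • y)‖ ≤ b := by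
  rw [map_add, map_smul, map_smul]
  calc ‖s • L x + t • L y‖ ≤ ‖s • L x‖ + ‖t • L y‖ := norm_add_le _ _
    _ = s * ‖L x‖ + t * ‖L y‖ := by
        rw [norm_smul, norm_smul, Real.norm_eq_abs, Real.norm_eq_abs,
          abs_of_nonneg hs, abs_of_nonneg ht]
    _ ≤ s * b + t * b := by
        gcongr
    _ = b := by rw [← add_mul, hst, one_mul]

lemma strict_midpoint {u v : EuclideanSpace ℝ (Fin n)} {ρ : ℝ} (hρ : 0 < ρ)
    (hu : ‖u‖ ≤ ρ) (hv : ‖v‖ ≤ ρ) (hne : u ≠ v) :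
    ‖(1/2 : ℝ) • u + (1/2 : ℝ) • v‖ < ρ := by
  have hmem : (1/2 : ℝ) • u + (1/2 : ℝ) • v ∈ openSegment ℝ u v :=
    ⟨1/2, 1/2, by norm_num, by norm_num, by norm_num, rfl⟩
  have := (strictConvex_closedBall ℝ (0 : EuclideanSpace ℝ (Fin n)) ρ).openSegment_subset
    (by simpa using hu) (by simpa using hv) hne hmem
  rw [interior_closedBall _ (ne_of_gt hρ)] at this
  simpa using this

theorem all_face_patterns_realisable {k : ℕ} (d : Fin (k + 1) → ℕ)
    (hmono : StrictMono d) (hpos : ∀ i, 0 < d i) :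
    ∃ C : Set (EuclideanSpace ℝ (Fin (d (Fin.last k)))),
      IsCompact C ∧ Convex ℝ C ∧
        {m : ℕ | ∃ F, IsFace C F ∧ 0 < setDim F ∧ setDim F = m} = Set.range d := by
  classical
  set n := d (Fin.last k) with hn
  have hdn : ∀ j, d j ≤ n := fun j => hmono.monotone (Fin.le_last j)
  have hanti : ∀ i j : Fin (k+1), i < j → n - d j < n - d i := by
    intro i j hij
    have := hmono hij
    have := hdn j
    omega
  set a : Fin (k+1) → ℕ := fun j => n - d j with ha
  have haj : ∀ j, a j + d j = n := fun j => Nat.sub_add_cancel (hdn j)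
  have hamono : ∀ i j : Fin (k+1), i ≤ j → a j ≤ a i := by
    intro i j hij
    rcases eq_or_lt_of_le hij with rfl | h
    · exact le_refl _
    · exact le_of_lt (hanti i j h)
  have halast : a (Fin.last k) = 0 := by simp [ha, hn]
  set ε0 : ℝ := 1 / ((k : ℝ) + 3) with hε0def
  have hε0 : 0 < ε0 := by positivity
  set r : Fin (k+1) → ℝ := fun j => ((k:ℝ) + 2 - (j:ℕ)) / ((k:ℝ) + 3) with hr
  have hk3 : (0:ℝ) < (k:ℝ) + 3 := by positivity
  have hjk : ∀ j : Fin (k+1), ((j:ℕ):ℝ) ≤ (k:ℝ) := by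
    intro j; exact_mod_cast Fin.is_le j
  have hrε : ∀ j, ε0 < r j := by
    intro j
    rw [hr, hε0def, div_lt_div_iff₀ hk3 hk3]
    have := hjk j
    nlinarith
  have hrpos : ∀ j, 0 < r j := fun j => lt_trans hε0 (hrε j)
  have hrlt1 : ∀ j, r j + ε0 ≤ 1 := by
    intro j
    rw [hr, hε0def]
    rw [← add_div, div_le_one hk3]
    have : (0:ℝ) ≤ ((j:ℕ):ℝ) := by positivity
    linarith
  have hrgap : ∀ i j : Fin (k+1), i < j → r j + ε0 ≤ r i := by
    intro i j hij
    rw [hr, hε0def, ← add_div, div_le_div_iff₀ hk3 hk3]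
    have hij' : ((i:ℕ):ℝ) + 1 ≤ ((j:ℕ):ℝ) := by
      have : (i:ℕ) < (j:ℕ) := hij
      exact_mod_cast this
    nlinarith
  have hrle : ∀ i j : Fin (k+1), i ≤ j → r j ≤ r i := by
    intro i j hij
    rcases eq_or_lt_of_le hij with rfl | h
    · exact le_refl _
    · have := hrgap i j h; linarith
  set C : Set (EuclideanSpace ℝ (Fin n)) :=
    {x | ‖x‖ ≤ 1 ∧ ∀ j, ‖projL n (a j) x‖ ≤ r j} with hC
  -- small vectors belong to C
  have hsmall : ∀ w : EuclideanSpace ℝ (Fin n), ‖w‖ ≤ ε0 → w ∈ C := by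
    intro w hw
    constructor
    · have : ε0 ≤ 1 := by
        have := hrlt1 (Fin.last k)
        have := hrpos (Fin.last k)
        linarith
      linarith
    · intro j
      exact le_trans (le_trans (norm_projL_le _ _) hw) (le_of_lt (hrε j))
  have hCconv : Convex ℝ C := by
    intro x hx y hy s t hs ht hst
    refine ⟨?_, fun j => ?_⟩
    · have := combo_norm_le (LinearMap.id : EuclideanSpace ℝ (Fin n) →ₗ[ℝ] _)
        (by simpa using hx.1) (by simpa using hy.1) hs ht hst
      simpa using this
    · exact combo_norm_le (projL n (a j)) (hx.2 j) (hy.2 j) hs ht hst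
  have hCcompact : IsCompact C := by
    apply (isCompact_closedBall (0 : EuclideanSpace ℝ (Fin n)) 1).of_isClosed_subset
    · rw [hC, Set.setOf_and]
      apply IsClosed.inter
      · exact isClosed_le continuous_norm continuous_const
      · rw [Set.setOf_forall]
        apply isClosed_iInter
        intro j
        exact isClosed_le (continuous_norm.comp (projL n (a j)).continuous_of_finiteDimensional)
          continuous_const
    · intro x hx
      simpa using hx.1
  refine ⟨C, hCcompact, hCconv, ?_⟩
  apply Set.eq_of_subset_of_subset
  · -- every positive-dim face dimension is in the range of d
    rintro m ⟨F, ⟨hFconv, hFext⟩, hFpos, hFdim⟩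
    have hFC : F ⊆ C := hFext.1
    have hFnt : F.Nontrivial := by
      rw [← Set.not_subsingleton_iff]
      intro h
      rw [setDim_subsingleton h] at hFpos
      exact lt_irrefl 0 hFpos
    by_cases hsph : ∀ w ∈ F, ‖w‖ = 1
    · exfalso
      obtain ⟨y, hy, z, hz, hyz⟩ := hFnt
      have hm : (1/2 : ℝ) • y + (1/2 : ℝ) • z ∈ F :=
        hFconv hy hz (by norm_num) (by norm_num) (by norm_num)
      have h1 := strict_midpoint one_pos (le_of_eq (hsph y hy)) (le_of_eq (hsph z hz)) hyz
      rw [hsph _ hm] at h1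
      exact lt_irrefl _ h1
    push_neg at hsph
    obtain ⟨x₀, hx₀F, hx₀⟩ := hsph
    have hx₀lt : ‖x₀‖ < 1 := lt_of_le_of_ne (hFC hx₀F).1 hx₀
    set S : Set (Fin (k+1)) := {j | ∀ y ∈ F, ‖projL n (a j) y‖ = r j} with hS
    have hwit : ∀ j : Fin (k+1), ∃ y₀, y₀ ∈ F ∧ (j ∉ S → ‖projL n (a j) y₀‖ < r j) := by
      intro j
      by_cases hj : j ∈ S
      · exact ⟨x₀, hx₀F, fun h => absurd hj h⟩
      · rw [hS, Set.mem_setOf_eq] at hj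
        push_neg at hj
        obtain ⟨y₀, hy₀F, hne⟩ := hj
        exact ⟨y₀, hy₀F, fun _ => lt_of_le_of_ne ((hFC hy₀F).2 j) hne⟩
    set t : Fin (k+2) → EuclideanSpace ℝ (Fin n) :=
      Fin.cons x₀ (fun j => (hwit j).choose) with htdef
    have htF : ∀ i, t i ∈ F := by
      intro i
      refine Fin.cases ?_ ?_ i
      · rw [htdef, Fin.cons_zero]; exact hx₀F
      · intro j; rw [htdef, Fin.cons_succ]; exact (hwit j).choose_spec.1
    set x : EuclideanSpace ℝ (Fin n) := ((k:ℝ) + 2)⁻¹ • ∑ i, t i with hxdef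
    have hN : (0:ℝ) < ((k+2:ℕ):ℝ) := by positivity
    have hxF : x ∈ F := by
      rw [hxdef, Finset.smul_sum]
      apply hFconv.sum_mem (fun i _ => by positivity)
      · rw [Finset.sum_const, Finset.card_univ, Fintype.card_fin, nsmul_eq_mul]
        push_cast
        field_simp
      · exact fun i _ => htF i
    have hxC : x ∈ C := hFC hxF
    have hxnorm : ‖x‖ < 1 := by
      have := avg_norm_lt (n := n) (N := k+2) (by omega)
        (LinearMap.id : EuclideanSpace ℝ (Fin n) →ₗ[ℝ] _) t (b := 1)
        (fun i => by simpa using (hFC (htF i)).1) 0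
        (by simp only [LinearMap.id_apply, htdef, Fin.cons_zero]; exact hx₀lt)
      simpa using this
    have hxstrict : ∀ j ∉ S, ‖projL n (a j) x‖ < r j := by
      intro j hj
      have := avg_norm_lt (n := n) (N := k+2) (by omega) (projL n (a j)) t (b := r j)
        (fun i => (hFC (htF i)).2 j) j.succ
        (by rw [htdef, Fin.cons_succ]; exact (hwit j).choose_spec.2 hj)
      rw [hxdef, map_smul, map_sum]
      simpa using this
    have hxS : ∀ j ∈ S, ‖projL n (a j) x‖ = r j := fun j hj => hj x hxF
    have hlastS : Fin.last k ∉ S := by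
      intro h
      have h1 := h x hxF
      have h2 : projL n (a (Fin.last k)) x = 0 := by
        rw [halast]; ext i; simp
      rw [h2, norm_zero] at h1
      exact absurd h1.symm (ne_of_gt (hrpos _))
    obtain ⟨j0, hj0le, hj0key⟩ :
        ∃ j0 : Fin (k+1), (∀ j ∈ S, j0 ≤ j) ∧ (j0 ∈ S ∨ a j0 = 0) := by
      by_cases hSne : S.Nonempty
      · have hTne : (S.toFinite.toFinset).Nonempty := by
          rwa [Set.Finite.toFinset_nonempty]
        refine ⟨(S.toFinite.toFinset).min' hTne, ?_, Or.inl ?_⟩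
        · intro j hj
          exact Finset.min'_le _ _ (by rwa [Set.Finite.mem_toFinset])
        · have := Finset.min'_mem (S.toFinite.toFinset) hTne
          rwa [Set.Finite.mem_toFinset] at this
      · exact ⟨Fin.last k, fun j hj => absurd ⟨j, hj⟩ hSne, Or.inr halast⟩
    set G : Set (EuclideanSpace ℝ (Fin n)) :=
      {y ∈ C | projL n (a j0) y = projL n (a j0) x} with hG
    have hprojconst : ∀ j ∈ S, ∀ y ∈ F, projL n (a j) y = projL n (a j) x := by
      intro j hj y hyF
      by_contra hne
      have hm : (1/2 : ℝ) • y + (1/2 : ℝ) • x ∈ F :=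
        hFconv hyF hxF (by norm_num) (by norm_num) (by norm_num)
      have h1 : ‖projL n (a j) ((1/2 : ℝ) • y + (1/2 : ℝ) • x)‖ = r j := hj _ hm
      have h2 : projL n (a j) ((1/2 : ℝ) • y + (1/2 : ℝ) • x)
          = (1/2 : ℝ) • projL n (a j) y + (1/2 : ℝ) • projL n (a j) x := by
        rw [map_add, map_smul, map_smul]
      have h3 := strict_midpoint (hrpos j) (le_of_eq (hj y hyF)) (le_of_eq (hxS j hj)) hne
      rw [← h2, h1] at h3
      exact lt_irrefl _ h3
    have hFG : F ⊆ G := by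
      intro y hyF
      refine ⟨hFC hyF, ?_⟩
      rcases hj0key with h | h
      · exact hprojconst j0 h y hyF
      · rw [h]; ext i; simp
    have hGext : IsExtreme ℝ C G := by
      rcases hj0key with h | h
      · exact isExtreme_slice (hrpos j0) (fun y hy => hy.2 j0) (hxS j0 h)
      · have hGC : G = C := by
          ext y
          rw [hG]
          simp only [Set.mem_setOf_eq, and_iff_left_iff_imp]
          intro _
          rw [h]; ext i; simp
        exact hGC ▸ IsExtreme.refl ℝ C
    -- the gap δ
    have hTne2 : (Finset.univ.filter (fun j : Fin (k+1) => j ∉ S)).Nonempty :=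
      ⟨Fin.last k, by simp [hlastS]⟩
    set δ : ℝ := min (1 - ‖x‖)
      ((Finset.univ.filter (fun j : Fin (k+1) => j ∉ S)).inf' hTne2
        (fun j => r j - ‖projL n (a j) x‖)) with hδdef
    have hδpos : 0 < δ := by
      apply lt_min (by linarith)
      rw [Finset.lt_inf'_iff]
      intro j hj
      rw [Finset.mem_filter] at hj
      have := hxstrict j hj.2
      linarith
    have hδ1 : δ ≤ 1 - ‖x‖ := min_le_left _ _
    have hδ2 : ∀ j ∉ S, δ ≤ r j - ‖projL n (a j) x‖ := by
      intro j hj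
      exact le_trans (min_le_right _ _) (Finset.inf'_le _ (by simp [hj]))
    have hball : ∀ w ∈ LinearMap.ker (projL n (a j0)), ‖w‖ ≤ δ/2 → x + w ∈ G := by
      intro w hw hnw
      have hwδ : ‖w‖ < δ := lt_of_le_of_lt hnw (by linarith)
      refine ⟨⟨?_, fun j => ?_⟩, ?_⟩
      · calc ‖x + w‖ ≤ ‖x‖ + ‖w‖ := norm_add_le _ _
          _ ≤ 1 := by linarith
      · by_cases hjS : j ∈ S
        · have hle : a j ≤ a j0 := hamono j0 j (hj0le j hjS)
          have hw0 : projL n (a j) w = 0 := projL_eq_zero_of_le hle hw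
          rw [map_add, hw0, add_zero, hxS j hjS]
        · have h1 : ‖projL n (a j) (x + w)‖ ≤ ‖projL n (a j) x‖ + ‖w‖ := by
            rw [map_add]
            exact le_trans (norm_add_le _ _) (by gcongr; exact norm_projL_le _ _)
          have := hδ2 j hjS
          linarith
      · rw [map_add, LinearMap.mem_ker.mp hw, add_zero]
    have hGF : G ⊆ F := by
      intro y hyG
      by_cases hyx : y = x
      · rwa [hyx]
      · have hxy0 : x - y ≠ 0 := sub_ne_zero.mpr (fun h => hyx h.symm)
        have hxy : 0 < ‖x - y‖ := norm_pos_iff.mpr hxy0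
        set s : ℝ := δ / (2 * ‖x - y‖) with hsdef
        have hs : 0 < s := by positivity
        set z : EuclideanSpace ℝ (Fin n) := x + s • (x - y) with hzdef
        have hker : s • (x - y) ∈ LinearMap.ker (projL n (a j0)) := by
          apply Submodule.smul_mem
          rw [LinearMap.mem_ker, map_sub, hyG.2, sub_self]
        have hnrm : ‖s • (x - y)‖ ≤ δ/2 := by
          have hne0 : ‖x - y‖ ≠ 0 := ne_of_gt hxy
          have heq : δ / (2 * ‖x - y‖) * ‖x - y‖ = δ / 2 := by
            field_simp
          rw [norm_smul, Real.norm_eq_abs, abs_of_pos hs, hsdef, heq]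
        have hzG : z ∈ G := hball _ hker hnrm
        have hseg : x ∈ openSegment ℝ y z := by
          have h1s : (1:ℝ) + s ≠ 0 := by positivity
          refine ⟨s/(1+s), 1/(1+s), by positivity, by positivity, ?_, ?_⟩
          · rw [← add_div, add_comm s 1, div_self h1s]
          · rw [hzdef]
            match_scalars <;> field_simp <;> ring
        exact (hFext.2 hyG.1 hzG.1 hxF hseg)
    have hFGeq : F = G := Set.Subset.antisymm hFG hGF
    have hdimF : setDim F = d j0 := by
      rw [hFGeq]
      rw [setDim_of_sandwich (x := x) (W := LinearMap.ker (projL n (a j0)))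
        (ε := δ/2) (by linarith) hball ?h2]
      · exact finrank_ker_projL (haj j0)
      case h2 =>
        intro y hyG
        rw [LinearMap.mem_ker, map_sub, hyG.2, sub_self]
    exact ⟨j0, by rw [← hFdim, hdimF]⟩
  · -- every d j is realised
    rintro m ⟨j, rfl⟩
    by_cases hdj : d j = n
    · refine ⟨C, ⟨hCconv, IsExtreme.refl ℝ C⟩, ?_⟩
      have haj0 : a j = 0 := by have := haj j; omega
      have hdim : setDim C = d j := by
        rw [setDim_of_sandwich (x := 0) (W := LinearMap.ker (projL n (a j))) (ε := ε0) hε0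
          ?h1 ?h2]
        · exact finrank_ker_projL (haj j)
        case h1 =>
          intro w _ hwn
          simpa using hsmall w hwn
        case h2 =>
          intro y _
          rw [LinearMap.mem_ker, haj0]
          ext i; simp
      exact ⟨by rw [hdim]; exact hpos j, hdim⟩
    · have hdjn : d j < n := lt_of_le_of_ne (hdn j) hdj
      have hajpos : 0 < a j := by have := haj j; omega
      have hnpos : 0 < n := lt_of_le_of_lt (Nat.zero_le _) hdjn
      set c : Fin n := ⟨a j - 1, by have := haj j; omega⟩ with hcdef
      set xj : EuclideanSpace ℝ (Fin n) := EuclideanSpace.single c (r j) with hxjdef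
      have hxjnorm : ‖xj‖ = r j := by
        rw [hxjdef, EuclideanSpace.norm_single, Real.norm_eq_abs, abs_of_pos (hrpos j)]
      have hproj_single : ∀ a' : ℕ, projL n a' xj = if (c:ℕ) < a' then xj else 0 := by
        intro a'
        split_ifs with hca
        · ext i
          by_cases hi : (i:ℕ) < a'
          · simp [hi]
          · have : i ≠ c := fun h => hi (h ▸ hca)
            simp [hi, hxjdef, EuclideanSpace.single_apply, this]
        · ext i
          by_cases hi : (i:ℕ) < a'
          · have : i ≠ c := by
              intro h
              rw [h] at hi
              exact hca hi
            simp [hi, hxjdef, EuclideanSpace.single_apply, this]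
          · simp [hi]
      have hcaj : (c:ℕ) < a j := by rw [hcdef]; simp; omega
      have huj : projL n (a j) xj = xj := by rw [hproj_single, if_pos hcaj]
      have hprojle : ∀ i : Fin (k+1), ‖projL n (a i) xj‖ ≤ r i := by
        intro i
        rw [hproj_single]
        split_ifs with hcai
        · -- a j - 1 < a i, so a j ≤ a i, so i ≤ j
          have hij : i ≤ j := by
            by_contra hlt
            push_neg at hlt
            have h1 := hanti j i hlt
            have h2 : (c:ℕ) = a j - 1 := rfl
            have h3 : a i = n - d i := rfl
            have h4 : a j = n - d j := rfl
            rw [h2, h3] at hcai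
            omega
          rw [hxjnorm]
          exact hrle i j hij
        · rw [norm_zero]; exact le_of_lt (hrpos i)
      have hxjC : xj ∈ C := by
        refine ⟨?_, hprojle⟩
        rw [hxjnorm]
        have := hrlt1 j
        linarith
      set F : Set (EuclideanSpace ℝ (Fin n)) := {y ∈ C | projL n (a j) y = xj} with hF
      have hFconv : Convex ℝ F := by
        have : F = C ∩ (projL n (a j)) ⁻¹' {xj} := rfl
        rw [this]
        exact hCconv.inter ((convex_singleton xj).linear_preimage _)
      have hFext : IsExtreme ℝ C F :=
        isExtreme_slice (hrpos j) (fun y hy => hy.2 j) hxjnorm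
      have hdim : setDim F = d j := by
        rw [setDim_of_sandwich (x := xj) (W := LinearMap.ker (projL n (a j))) (ε := ε0) hε0
          ?h1 ?h2]
        · exact finrank_ker_projL (haj j)
        case h1 =>
          intro w hw hwn
          refine ⟨⟨?_, fun i => ?_⟩, ?_⟩
          · calc ‖xj + w‖ ≤ ‖xj‖ + ‖w‖ := norm_add_le _ _
              _ ≤ r j + ε0 := by rw [hxjnorm]; gcongr
              _ ≤ 1 := hrlt1 j
          · rcases lt_trichotomy i j with hij | hij | hij
            · calc ‖projL n (a i) (xj + w)‖
                  ≤ ‖projL n (a i) xj‖ + ‖projL n (a i) w‖ := by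
                    rw [map_add]; exact norm_add_le _ _
                _ ≤ r j + ε0 := by
                    gcongr
                    · rw [huj] at *
                      calc ‖projL n (a i) xj‖ ≤ ‖xj‖ := norm_projL_le _ _
                        _ = r j := hxjnorm
                    · exact le_trans (norm_projL_le _ _) hwn
                _ ≤ r i := hrgap i j hij
            · subst hij
              rw [map_add, LinearMap.mem_ker.mp hw, add_zero, huj, hxjnorm]
            · have hai : a i < a j := hanti j i hij
              have h0 : projL n (a i) xj = 0 := by
                rw [hproj_single, if_neg]
                rw [hcdef]
                simp
                omega
              rw [map_add, h0, zero_add]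
              exact le_trans (le_trans (norm_projL_le _ _) hwn) (le_of_lt (hrε i))
          · rw [map_add, LinearMap.mem_ker.mp hw, add_zero, huj]
        case h2 =>
          intro y hyF
          rw [LinearMap.mem_ker, map_sub, hyF.2, huj, sub_self]
      exact ⟨F, ⟨hFconv, hFext⟩, by rw [hdim]; exact hpos j, hdim⟩

end
end
end

section
/- Let C ⊆ ℝ³ be the convex hull of the unit circle {(x,y,0) : x² + y² = 1} together with the two points (0,0,1) and (0,0,−1). Then C has faces of dimensions 0, 1 and 3, but no face of dimension 2. -/
noncomputable section
open Real

abbrev E3 := EuclideanSpace ℝ (Fin 3)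

def pt (a b c : ℝ) : E3 := WithLp.toLp 2 ![a, b, c]

@[simp] lemma pt_0 (a b c : ℝ) : pt a b c 0 = a := rfl
@[simp] lemma pt_1 (a b c : ℝ) : pt a b c 1 = b := rfl
@[simp] lemma pt_2 (a b c : ℝ) : pt a b c 2 = c := rfl

lemma e3_ext {x y : E3} (h0 : x 0 = y 0) (h1 : x 1 = y 1) (h2 : x 2 = y 2) : x = y := by
  ext i; fin_cases i <;> assumption

def pl (x : E3) : ℂ := ⟨x 0, x 1⟩

@[simp] lemma pl_re (x : E3) : (pl x).re = x 0 := rfl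
@[simp] lemma pl_im (x : E3) : (pl x).im = x 1 := rfl

lemma pl_add (x y : E3) : pl (x + y) = pl x + pl y := by
  apply Complex.ext <;> simp [pl]

lemma pl_smul (c : ℝ) (x : E3) : pl (c • x) = c • pl x := by
  apply Complex.ext <;> simp [pl, Complex.real_smul]

def g (x : E3) : ℝ := ‖pl x‖ + |x 2|

lemma g_nonneg (x : E3) : 0 ≤ g x := add_nonneg (norm_nonneg _) (abs_nonneg _)

lemma norm_pl_sq (x : E3) : ‖pl x‖ ^ 2 = x 0 ^ 2 + x 1 ^ 2 := by
  rw [Complex.sq_norm, Complex.normSq_apply]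
  simp [pl]
  ring

lemma g_add_le (x y : E3) : g (x + y) ≤ g x + g y := by
  have h1 : ‖pl (x + y)‖ ≤ ‖pl x‖ + ‖pl y‖ := by rw [pl_add]; exact norm_add_le _ _
  have h2 : |(x + y) 2| ≤ |x 2| + |y 2| := by
    have : (x + y) 2 = x 2 + y 2 := rfl
    rw [this]; exact abs_add_le _ _
  unfold g; linarith

lemma g_smul (c : ℝ) (x : E3) : g (c • x) = |c| * g x := by
  have h1 : ‖pl (c • x)‖ = |c| * ‖pl x‖ := by rw [pl_smul, norm_smul]; simp
  have h2 : |(c • x) 2| = |c| * |x 2| := by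
    have : (c • x) 2 = c * x 2 := rfl
    rw [this, abs_mul]
  unfold g; rw [h1, h2]; ring

lemma g_eq_zero {x : E3} (h : g x = 0) : x = 0 := by
  have h1 : ‖pl x‖ = 0 := by have := abs_nonneg (x 2); have := norm_nonneg (pl x); unfold g at h; linarith
  have h2 : |x 2| = 0 := by have := norm_nonneg (pl x); unfold g at h; linarith
  have h3 : pl x = 0 := norm_eq_zero.mp h1
  ext i
  fin_cases i
  · exact congrArg Complex.re h3
  · exact congrArg Complex.im h3
  · exact abs_eq_zero.mp h2

def Sgen : Set E3 :=
  {x : E3 | x 0 ^ 2 + x 1 ^ 2 = 1 ∧ x 2 = 0} ∪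
  {x : E3 | x 0 = 0 ∧ x 1 = 0 ∧ (x 2 = 1 ∨ x 2 = -1)}

lemma g_eq_one_of_gen {x : E3} (hx : x ∈ Sgen) : g x = 1 := by
  rcases hx with ⟨h1, h2⟩ | ⟨h1, h2, h3⟩
  · have : ‖pl x‖ ^ 2 = 1 := by rw [norm_pl_sq, h1]
    have hn : ‖pl x‖ = 1 := by nlinarith [norm_nonneg (pl x)]
    simp [g, hn, h2]
  · have : ‖pl x‖ ^ 2 = 0 := by rw [norm_pl_sq, h1, h2]; ring
    have hn : ‖pl x‖ = 0 := by nlinarith [norm_nonneg (pl x)]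
    rcases h3 with h | h <;> simp [g, hn, h]

lemma mem_hull_iff (x : E3) : x ∈ convexHull ℝ Sgen ↔ g x ≤ 1 := by
  constructor
  · intro hx
    have hconv : Convex ℝ {y : E3 | g y ≤ 1} := by
      intro u hu v hv a b ha hb hab
      calc g (a • u + b • v) ≤ g (a • u) + g (b • v) := g_add_le _ _
        _ = |a| * g u + |b| * g v := by rw [g_smul, g_smul]
        _ = a * g u + b * g v := by rw [abs_of_nonneg ha, abs_of_nonneg hb]
        _ ≤ a * 1 + b * 1 := by
            apply add_le_add <;> apply mul_le_mul_of_nonneg_left <;> first | exact hu | exact hv | exact ha | exact hb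
        _ = 1 := by linarith
    exact convexHull_min (fun y hy => le_of_eq (g_eq_one_of_gen hy)) hconv hx
  · intro hx
    have hN : pt 0 0 1 ∈ convexHull ℝ Sgen :=
      subset_convexHull ℝ _ (Or.inr ⟨rfl, rfl, Or.inl rfl⟩)
    have hS : pt 0 0 (-1) ∈ convexHull ℝ Sgen :=
      subset_convexHull ℝ _ (Or.inr ⟨rfl, rfl, Or.inr rfl⟩)
    set r := ‖pl x‖ with hr
    have hr0 : 0 ≤ r := norm_nonneg _
    have hxz : |x 2| ≤ 1 - r := by unfold g at hx; linarith
    have hr1 : r ≤ 1 := by have := abs_nonneg (x 2); linarith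
    rcases eq_or_lt_of_le hr1 with heq | hlt
    · -- r = 1, so x 2 = 0, x on circle
      have habs : |x 2| = 0 := le_antisymm (by linarith) (abs_nonneg _)
      have hz : x 2 = 0 := abs_eq_zero.mp habs
      apply subset_convexHull ℝ _
      left
      exact ⟨by rw [← norm_pl_sq, show ‖pl x‖ = 1 from hr ▸ heq]; norm_num, hz⟩
    · -- r < 1
      have h1r : (0:ℝ) < 1 - r := by linarith
      set w := x 2 / (1 - r) with hw
      have hw1 : |w| ≤ 1 := by
        rw [hw, abs_div, abs_of_pos h1r, div_le_one h1r]; exact hxz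
      have hq : pt 0 0 w ∈ convexHull ℝ Sgen := by
        have := (convex_convexHull ℝ Sgen) hN hS (a := (1 + w)/2) (b := (1 - w)/2)
          (by rw [abs_le] at hw1; linarith) (by rw [abs_le] at hw1; linarith) (by ring)
        convert this using 1
        ext i; fin_cases i <;>
          simp [pt, PiLp.add_apply, PiLp.smul_apply] <;> ring
      rcases eq_or_lt_of_le hr0 with hr0' | hrpos
      · -- r = 0 : x = pt 0 0 (x 2)
        have hpl : pl x = 0 := norm_eq_zero.mp hr0'.symm
        have hx0 : x 0 = 0 := congrArg Complex.re hpl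
        have hx1 : x 1 = 0 := congrArg Complex.im hpl
        have : x = pt 0 0 w := by
          ext i; fin_cases i <;> simp [pt, hx0, hx1, hw, ← hr0']
        rw [this]; exact hq
      · -- 0 < r < 1
        have hrne : r ≠ 0 := ne_of_gt hrpos
        have hp : pt (x 0 / r) (x 1 / r) 0 ∈ convexHull ℝ Sgen := by
          apply subset_convexHull ℝ _
          left
          constructor
          · have : ‖pl x‖ ^ 2 = x 0 ^ 2 + x 1 ^ 2 := norm_pl_sq x
            simp only [pt_0, pt_1]
            field_simp
            rw [← this, ← hr]
          · rfl
        have := (convex_convexHull ℝ Sgen) hp hq (a := r) (b := 1 - r)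
          (le_of_lt hrpos) (by linarith) (by ring)
        convert this using 1
        ext i; fin_cases i <;>
          simp [pt, PiLp.add_apply, PiLp.smul_apply, hw] <;> field_simp

-- coordinate linear functionals
def cf (i : Fin 3) : E3 →ₗ[ℝ] ℝ :=
  { toFun := fun x => x i, map_add' := fun _ _ => rfl, map_smul' := fun _ _ => rfl }

@[simp] lemma cf_apply (i : Fin 3) (x : E3) : cf i x = x i := rfl

lemma face_of_functional {C : Set E3} (hconv : Convex ℝ C) (f : E3 →ₗ[ℝ] ℝ) (a : ℝ)
    (hb : ∀ x ∈ C, f x ≤ a) :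
    Convex ℝ {x ∈ C | f x = a} ∧ IsExtreme ℝ C {x ∈ C | f x = a} := by
  constructor
  · intro x hx y hy c d hc hd hcd
    refine ⟨hconv hx.1 hy.1 hc hd hcd, ?_⟩
    simp only [map_add, map_smul, smul_eq_mul, hx.2, hy.2]
    linear_combination a * hcd
  · refine ⟨fun x hx => hx.1, ?_⟩
    rintro x1 hx1 x2 hx2 x ⟨hxC, hxa⟩ ⟨c, d, hc, hd, hcd, rfl⟩
    have h1 : f x1 ≤ a := hb x1 hx1
    have h2 : f x2 ≤ a := hb x2 hx2
    have hsum : c * f x1 + d * f x2 = a := by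
      simpa [map_add, map_smul] using hxa
    have key : c * (a - f x1) + d * (a - f x2) = 0 := by linear_combination -hsum + a * hcd
    have t1 : 0 ≤ c * (a - f x1) := mul_nonneg hc.le (by linarith)
    have t2 : 0 ≤ d * (a - f x2) := mul_nonneg hd.le (by linarith)
    have e1 : f x1 = a := by
      have : c * (a - f x1) = 0 := by linarith
      rcases mul_eq_zero.mp this with h | h
      · exact absurd h (ne_of_gt hc)
      · linarith
    have e2 : f x2 = a := by
      have : d * (a - f x2) = 0 := by linarith
      rcases mul_eq_zero.mp this with h | h
      · exact absurd h (ne_of_gt hd)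
      · linarith
    exact ⟨hx1, e1⟩

lemma coord0_le (x : E3) : x 0 ≤ ‖pl x‖ := by
  nlinarith [norm_pl_sq x, norm_nonneg (pl x), sq_nonneg (x 1)]

lemma bound2 : ∀ x ∈ convexHull ℝ Sgen, cf 2 x ≤ 1 := by
  intro x hx
  have hg := (mem_hull_iff x).mp hx
  have := le_abs_self (x 2)
  have := norm_nonneg (pl x)
  simp only [cf_apply]
  unfold g at hg; linarith

lemma bound02 : ∀ x ∈ convexHull ℝ Sgen, (cf 0 + cf 2) x ≤ 1 := by
  intro x hx
  have hg := (mem_hull_iff x).mp hx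
  have h0 := coord0_le x
  have h2 := le_abs_self (x 2)
  simp only [LinearMap.add_apply, cf_apply]
  unfold g at hg; linarith

lemma face0_eq : {x ∈ convexHull ℝ Sgen | cf 2 x = 1} = {pt 0 0 1} := by
  apply Set.eq_singleton_iff_unique_mem.mpr
  constructor
  · exact ⟨(mem_hull_iff _).mpr (le_of_eq (g_eq_one_of_gen (Or.inr ⟨rfl, rfl, Or.inl rfl⟩))), rfl⟩
  · rintro x ⟨hxC, hx2⟩
    simp only [cf_apply] at hx2
    have hg := (mem_hull_iff x).mp hxC
    have hn : ‖pl x‖ = 0 := by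
      have : |x 2| = 1 := by rw [hx2]; norm_num
      have := norm_nonneg (pl x)
      unfold g at hg; linarith
    have hpl : pl x = 0 := norm_eq_zero.mp hn
    ext i; fin_cases i
    · exact congrArg Complex.re hpl
    · exact congrArg Complex.im hpl
    · exact hx2

lemma face1_eq :
    {x ∈ convexHull ℝ Sgen | (cf 0 + cf 2) x = 1} = segment ℝ (pt 1 0 0) (pt 0 0 1) := by
  ext x
  constructor
  · rintro ⟨hxC, hx⟩
    simp only [LinearMap.add_apply, cf_apply] at hx
    have hg := (mem_hull_iff x).mp hxC
    have h0 := coord0_le x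
    have h2 := le_abs_self (x 2)
    unfold g at hg
    have e0 : x 0 = ‖pl x‖ := by linarith
    have e2 : x 2 = |x 2| := by linarith
    have hx1sq : x 1 ^ 2 = 0 := by
      have hq := norm_pl_sq x
      rw [← e0] at hq
      linarith
    have hx1 : x 1 = 0 := by
      have := sq_nonneg (x 1); nlinarith
    have hz0 : 0 ≤ x 2 := by rw [e2]; exact abs_nonneg _
    have hx0 : 0 ≤ x 0 := by rw [e0]; exact norm_nonneg _
    refine ⟨x 0, x 2, hx0, hz0, by linarith, ?_⟩
    ext i; fin_cases i <;> simp [pt, PiLp.add_apply, PiLp.smul_apply, hx1]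
  · rintro ⟨a, b, ha, hb, hab, rfl⟩
    have hP : pt 1 0 0 ∈ convexHull ℝ Sgen :=
      subset_convexHull ℝ _ (Or.inl ⟨by norm_num, rfl⟩)
    have hN : pt 0 0 1 ∈ convexHull ℝ Sgen :=
      subset_convexHull ℝ _ (Or.inr ⟨rfl, rfl, Or.inl rfl⟩)
    refine ⟨(convex_convexHull ℝ Sgen) hP hN ha hb hab, ?_⟩
    have c0 : (a • pt 1 0 0 + b • pt 0 0 1) 0 = a := by
      simp [pt, PiLp.add_apply, PiLp.smul_apply]
    have c2 : (a • pt 1 0 0 + b • pt 0 0 1) 2 = b := by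
      simp [pt, PiLp.add_apply, PiLp.smul_apply]
    simp only [LinearMap.add_apply, cf_apply, c0, c2]
    exact hab

lemma setDim_singleton (p : E3) : setDim ({p} : Set E3) = 0 := by
  unfold setDim
  rw [direction_affineSpan, vectorSpan_singleton]
  exact finrank_bot ℝ E3

lemma setDim_seg : setDim (segment ℝ (pt 1 0 0) (pt 0 0 1)) = 1 := by
  unfold setDim
  rw [← convexHull_pair, affineSpan_convexHull, direction_affineSpan, vectorSpan_pair]
  apply finrank_span_singleton
  intro h
  have : (pt 1 0 0 -ᵥ pt 0 0 1) 0 = 0 := by rw [h]; rfl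
  simp [pt, PiLp.sub_apply] at this

lemma setDim_hull : setDim (convexHull ℝ Sgen) = 3 := by
  have h0 : (0 : E3) ∈ convexHull ℝ Sgen := by
    rw [mem_hull_iff]
    have : g 0 = 0 := by
      have : pl 0 = 0 := by apply Complex.ext <;> simp [pl]
      simp [g, this]
    linarith
  have hmem : ∀ a b c : ℝ, g (pt a b c) ≤ 1 → pt a b c ∈ convexHull ℝ Sgen :=
    fun a b c h => (mem_hull_iff _).mpr h
  have gP : g (pt 1 0 0) = 1 := g_eq_one_of_gen (Or.inl ⟨by norm_num, rfl⟩)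
  have gQ : g (pt 0 1 0) = 1 := g_eq_one_of_gen (Or.inl ⟨by norm_num, rfl⟩)
  have gN : g (pt 0 0 1) = 1 := g_eq_one_of_gen (Or.inr ⟨rfl, rfl, Or.inl rfl⟩)
  have hP := hmem 1 0 0 (le_of_eq gP)
  have hQ := hmem 0 1 0 (le_of_eq gQ)
  have hN := hmem 0 0 1 (le_of_eq gN)
  have hvP : pt 1 0 0 ∈ vectorSpan ℝ (convexHull ℝ Sgen) := by
    have := vsub_mem_vectorSpan ℝ hP h0
    simpa using this
  have hvQ : pt 0 1 0 ∈ vectorSpan ℝ (convexHull ℝ Sgen) := by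
    have := vsub_mem_vectorSpan ℝ hQ h0
    simpa using this
  have hvN : pt 0 0 1 ∈ vectorSpan ℝ (convexHull ℝ Sgen) := by
    have := vsub_mem_vectorSpan ℝ hN h0
    simpa using this
  have htop : vectorSpan ℝ (convexHull ℝ Sgen) = ⊤ := by
    rw [eq_top_iff]
    intro x _
    have hxe : x = x 0 • pt 1 0 0 + x 1 • pt 0 1 0 + x 2 • pt 0 0 1 := by
      ext i; fin_cases i <;> simp [pt, PiLp.add_apply, PiLp.smul_apply]
    rw [hxe]
    exact Submodule.add_mem _ (Submodule.add_mem _ (Submodule.smul_mem _ _ hvP)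
      (Submodule.smul_mem _ _ hvQ)) (Submodule.smul_mem _ _ hvN)
  unfold setDim
  rw [direction_affineSpan, htop, finrank_top]
  simp

set_option maxHeartbeats 1000000 in
lemma no_face_dim_two (F : Set E3) (hface : IsFace (convexHull ℝ Sgen) F) : setDim F ≠ 2 := by
  intro h2
  set C := convexHull ℝ Sgen with hCdef
  by_cases hlt : ∃ z ∈ F, g z < 1
  · -- F contains a "g-interior" point, so F = C, dimension 3
    obtain ⟨z, hzF, hz⟩ := hlt
    have hCF : C ⊆ F := by
      intro y hy
      by_cases hyz : y = z
      · exact hyz ▸ hzF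
      · have hzyne : z - y ≠ 0 := sub_ne_zero.mpr (Ne.symm hyz)
        have hgzy : 0 < g (z - y) := by
          rcases lt_or_eq_of_le (g_nonneg (z - y)) with h | h
          · exact h
          · exact absurd (g_eq_zero h.symm) hzyne
        set ε := (1 - g z) / g (z - y) with hεdef
        have hε : 0 < ε := div_pos (by linarith) hgzy
        set w := z + ε • (z - y) with hwdef
        have hgw : g w ≤ 1 := by
          have h1 : g w ≤ g z + g (ε • (z - y)) := g_add_le _ _
          have h2 : g (ε • (z - y)) = ε * g (z - y) := by
            rw [g_smul, abs_of_pos hε]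
          have h3 : ε * g (z - y) = 1 - g z := by
            rw [hεdef]; field_simp
          linarith
        have hwC : w ∈ C := (mem_hull_iff w).mpr hgw
        have h1ε : (0:ℝ) < 1 + ε := by linarith
        have hseg : z ∈ openSegment ℝ y w := by
          refine ⟨ε / (1 + ε), 1 / (1 + ε), div_pos hε h1ε, div_pos one_pos h1ε,
            by field_simp; ring, ?_⟩
          rw [hwdef]
          rw [smul_add, smul_smul, smul_sub]
          rw [show (1 / (1 + ε)) * ε = ε / (1 + ε) by ring]
          have : ∀ u v : E3, ∀ a b c : ℝ, a • u + (b • v + (c • v - c • u)) =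
              (a - c) • u + (b + c) • v := by
            intro u v a b c
            module
          rw [this]
          rw [show ε / (1 + ε) - ε / (1 + ε) = 0 by ring,
            show 1 / (1 + ε) + ε / (1 + ε) = 1 by field_simp]
          simp
        exact hface.2.2 hy hwC hzF hseg
    have hFC : F = C := Set.Subset.antisymm hface.2.1 hCF
    rw [hFC, setDim_hull] at h2
    norm_num at h2
  · -- F lies on the unit sphere of g
    push_neg at hlt
    have hF1 : ∀ z ∈ F, g z = 1 := fun z hz =>
      le_antisymm ((mem_hull_iff z).mp (hface.2.1 hz)) (hlt z hz)
    have hpair : ∀ a ∈ F, ∀ b ∈ F, SameRay ℝ (pl a) (pl b) ∧ 0 ≤ a 2 * b 2 := by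
      intro a ha b hb
      have hm : (1/2 : ℝ) • a + (1/2 : ℝ) • b ∈ F :=
        hface.1 ha hb (by norm_num) (by norm_num) (by norm_num)
      have hgm := hF1 _ hm
      have hplm : pl ((1/2 : ℝ) • a + (1/2 : ℝ) • b) = (1/2 : ℝ) • (pl a + pl b) := by
        rw [pl_add, pl_smul, pl_smul, smul_add]
      have hzm : ((1/2 : ℝ) • a + (1/2 : ℝ) • b) 2 = (a 2 + b 2)/2 := by
        show (1/2) * a 2 + (1/2) * b 2 = _
        ring
      have hnorm : ‖pl ((1/2:ℝ) • a + (1/2:ℝ) • b)‖ = ‖pl a + pl b‖ / 2 := by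
        rw [hplm, norm_smul]
        simp
        ring

      have habs : |((1/2:ℝ) • a + (1/2:ℝ) • b) 2| = |a 2 + b 2| / 2 := by
        rw [hzm, abs_div]
        norm_num
      have hga := hF1 a ha
      have hgb := hF1 b hb
      unfold g at hgm hga hgb
      rw [hnorm, habs] at hgm
      have t1 : ‖pl a + pl b‖ ≤ ‖pl a‖ + ‖pl b‖ := norm_add_le _ _
      have t2 : |a 2 + b 2| ≤ |a 2| + |b 2| := abs_add_le _ _
      have e1 : ‖pl a + pl b‖ = ‖pl a‖ + ‖pl b‖ := by linarith
      have e2 : |a 2 + b 2| = |a 2| + |b 2| := by linarith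
      refine ⟨sameRay_iff_norm_add.mpr e1, ?_⟩
      rcases abs_cases (a 2) with ⟨ha1, ha2⟩ | ⟨ha1, ha2⟩ <;>
        rcases abs_cases (b 2) with ⟨hb1, hb2⟩ | ⟨hb1, hb2⟩ <;>
        rcases abs_cases (a 2 + b 2) with ⟨hc1, hc2⟩ | ⟨hc1, hc2⟩ <;>
        nlinarith
    have hline : ∃ p v : E3, v ≠ 0 ∧ ∀ x ∈ F, ∃ t : ℝ, x = p + t • v := by
      by_cases hall : ∀ a ∈ F, pl a = 0
      · refine ⟨0, pt 0 0 1, ?_, ?_⟩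
        · intro h
          have := congrArg (fun x : E3 => x 2) h
          simp [pt] at this
        · intro x hx
          refine ⟨x 2, ?_⟩
          have h0 := congrArg Complex.re (hall x hx)
          have h1 := congrArg Complex.im (hall x hx)
          simp only [pl_re, pl_im, Complex.zero_re, Complex.zero_im] at h0 h1
          ext i
          fin_cases i <;> simp [pt, PiLp.add_apply, PiLp.smul_apply, h0, h1]
      · push_neg at hall
        obtain ⟨a₀, ha₀F, ha₀⟩ := hall
        set R := ‖pl a₀‖ with hRdef
        have hR : 0 < R := norm_pos_iff.mpr ha₀
        have key : ∀ σ : ℝ, (σ = 1 ∨ σ = -1) → (∀ b ∈ F, 0 ≤ σ * b 2) →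
            ∃ p v : E3, v ≠ 0 ∧ ∀ x ∈ F, ∃ t : ℝ, x = p + t • v := by
          intro σ hσ hsign
          refine ⟨pt (a₀ 0 / R) (a₀ 1 / R) 0,
            pt (-(σ * (a₀ 0 / R))) (-(σ * (a₀ 1 / R))) 1, ?_, ?_⟩
          · intro h
            have := congrArg (fun x : E3 => x 2) h
            simp [pt] at this
          · intro b hb
            obtain ⟨r, hr0, hrb⟩ := ((hpair a₀ ha₀F b hb).1).exists_nonneg_left ha₀
            have hb0 : b 0 = r * a₀ 0 := by
              have := congrArg Complex.re hrb
              simpa [Complex.real_smul, Complex.mul_re] using this.symm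
            have hb1 : b 1 = r * a₀ 1 := by
              have := congrArg Complex.im hrb
              simpa [Complex.real_smul, Complex.mul_im] using this.symm
            have hnb : ‖pl b‖ = r * R := by
              rw [← hrb, norm_smul]
              simp [abs_of_nonneg hr0, hRdef]
            have habs2 : |b 2| = σ * b 2 := by
              rcases hσ with h | h
              · rw [h]
                have := hsign b hb
                rw [h] at this
                rw [abs_of_nonneg (by linarith)]
                ring
              · rw [h]
                have := hsign b hb
                rw [h] at this
                rw [abs_of_nonpos (by linarith)]
                ring
            have hgb := hF1 b hb
            unfold g at hgb
            have hrR : r * R = 1 - σ * b 2 := by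
              rw [← hnb, ← habs2]
              linarith
            have hr_eq : r = (1 - σ * b 2) / R := by
              field_simp
              linarith
            have hRne : R ≠ 0 := ne_of_gt hR
            refine ⟨b 2, ?_⟩
            refine e3_ext ?_ ?_ ?_
            · show b 0 = a₀ 0 / R + b 2 * (-(σ * (a₀ 0 / R)))
              rw [hb0, hr_eq]
              field_simp
              ring
            · show b 1 = a₀ 1 / R + b 2 * (-(σ * (a₀ 1 / R)))
              rw [hb1, hr_eq]
              field_simp
              ring
            · show b 2 = 0 + b 2 * 1
              ring
        by_cases hneg : ∃ b ∈ F, b 2 < 0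
        · obtain ⟨b, hbF, hbneg⟩ := hneg
          apply key (-1) (Or.inr rfl)
          intro c hc
          have hp := (hpair b hbF c hc).2
          nlinarith
        · apply key 1 (Or.inl rfl)
          intro c hc
          push_neg at hneg
          have := hneg c hc
          simpa using this
    obtain ⟨p, v, hv, hlin⟩ := hline
    have hspan : vectorSpan ℝ F ≤ ℝ ∙ v := by
      rw [vectorSpan_def, Submodule.span_le]
      rintro u ⟨x, hx, y, hy, rfl⟩
      obtain ⟨tx, rfl⟩ := hlin x hx
      obtain ⟨ty, rfl⟩ := hlin y hy
      refine Submodule.mem_span_singleton.mpr ⟨tx - ty, ?_⟩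
      show (tx - ty) • v = (p + tx • v) - (p + ty • v)
      module
    have hle : setDim F ≤ 1 := by
      unfold setDim
      rw [direction_affineSpan]
      calc Module.finrank ℝ (vectorSpan ℝ F) ≤ Module.finrank ℝ (ℝ ∙ v) :=
            Submodule.finrank_mono hspan
        _ = 1 := finrank_span_singleton hv
    omega

end

theorem circle_with_two_poles_face_dims
    (C : Set (EuclideanSpace ℝ (Fin 3)))
    (hC : C = convexHull ℝ
      ({x : EuclideanSpace ℝ (Fin 3) | x 0 ^ 2 + x 1 ^ 2 = 1 ∧ x 2 = 0} ∪
       {x : EuclideanSpace ℝ (Fin 3) | x 0 = 0 ∧ x 1 = 0 ∧ (x 2 = 1 ∨ x 2 = -1)})) :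
    (∃ F, IsFace C F ∧ F.Nonempty ∧ setDim F = 0) ∧
      (∃ F, IsFace C F ∧ setDim F = 1) ∧
      (∃ F, IsFace C F ∧ setDim F = 3) ∧
      ¬∃ F, IsFace C F ∧ setDim F = 2 := by
  have hCeq : C = convexHull ℝ Sgen := hC
  refine ⟨?_, ?_, ?_, ?_⟩
  · refine ⟨{pt 0 0 1}, ?_, ⟨_, rfl⟩, setDim_singleton _⟩
    have h := face_of_functional (convex_convexHull ℝ Sgen) (cf 2) 1 bound2
    rw [face0_eq] at h
    rw [hCeq]
    exact ⟨h.1, h.2⟩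
  · refine ⟨segment ℝ (pt 1 0 0) (pt 0 0 1), ?_, setDim_seg⟩
    have h := face_of_functional (convex_convexHull ℝ Sgen) (cf 0 + cf 2) 1 bound02
    rw [face1_eq] at h
    rw [hCeq]
    exact ⟨h.1, h.2⟩
  · refine ⟨C, ⟨?_, IsExtreme.refl ℝ C⟩, ?_⟩
    · rw [hCeq]; exact convex_convexHull ℝ Sgen
    · rw [hCeq]; exact setDim_hull
  · rintro ⟨F, hface, hdim⟩
    rw [hCeq] at hface
    exact no_face_dim_two F hface hdim
end

section
/- Let B be the closed unit ball of ℝ³ and H = {x : x₃ ≤ 1/2}. Then C = B ∩ H has faces of dimensions 0, 2 and 3, and no face of dimension 1. -/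
open Metric

namespace SlicedBall

abbrev E3 := EuclideanSpace ℝ (Fin 3)

noncomputable def ev (i : Fin 3) : E3 := EuclideanSpace.single i 1

def Cs : Set E3 := closedBall 0 1 ∩ {x | x 2 ≤ 1 / 2}

def Ds : Set E3 := {x ∈ Cs | x 2 = 1 / 2}

lemma mem_Cs {x : E3} : x ∈ Cs ↔ ‖x‖ ≤ 1 ∧ x 2 ≤ 1 / 2 := by
  simp [Cs, mem_closedBall_zero_iff]

lemma coord_abs_le_norm (x : E3) (i : Fin 3) : |x i| ≤ ‖x‖ := by
  have h := abs_real_inner_le_norm (EuclideanSpace.single i (1:ℝ)) x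
  simpa [EuclideanSpace.inner_single_left, EuclideanSpace.norm_single] using h

lemma lin2 : IsLinearMap ℝ (fun x : E3 => x 2) :=
  ⟨fun x y => by simp [PiLp.add_apply], fun c x => by simp [PiLp.smul_apply]⟩

lemma convex_Cs : Convex ℝ Cs :=
  (convex_closedBall 0 1).inter (convex_halfSpace_le lin2 (1/2))

lemma convex_Ds : Convex ℝ Ds :=
  convex_Cs.inter (convex_hyperplane lin2 (1/2))

noncomputable def cc : E3 := (1/2 : ℝ) • ev 2

lemma cc_apply2 : cc 2 = 1/2 := by
  simp [cc, ev, PiLp.smul_apply, EuclideanSpace.single_apply]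

lemma cc_mem_Ds : cc ∈ Ds := by
  refine ⟨mem_Cs.2 ⟨?_, le_of_eq cc_apply2⟩, cc_apply2⟩
  rw [cc, norm_smul, ev, EuclideanSpace.norm_single]
  norm_num

lemma pt_mem_Ds (i : Fin 2) : cc + (1/2 : ℝ) • ev i.castSucc ∈ Ds := by
  have hi2 : (i.castSucc : Fin 3) ≠ 2 := by fin_cases i <;> decide
  have happ : ∀ j : Fin 3, (cc + (1/2 : ℝ) • ev i.castSucc) j
      = (if j = 2 then 1/2 else 0) + (if j = (i.castSucc : Fin 3) then 1/2 else 0) := by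
    intro j
    simp [cc, ev, PiLp.add_apply, PiLp.smul_apply, EuclideanSpace.single_apply]
  have hnorm : ‖cc + (1/2 : ℝ) • ev i.castSucc‖ ≤ 1 := by
    rw [EuclideanSpace.norm_eq]
    rw [show ∑ j, ‖(cc + (1/2 : ℝ) • ev i.castSucc) j‖ ^ 2
        = ∑ j : Fin 3, ((if j = 2 then 1/2 else 0)
            + (if j = (i.castSucc : Fin 3) then (1/2:ℝ) else 0)) ^ 2 by
      refine Finset.sum_congr rfl fun j _ => ?_
      rw [happ j, Real.norm_eq_abs, sq_abs]]
    have : ∑ j : Fin 3, ((if j = 2 then 1/2 else 0)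
        + (if j = (i.castSucc : Fin 3) then (1/2:ℝ) else 0)) ^ 2 ≤ 1 := by
      fin_cases i <;> simp [Fin.sum_univ_three] <;> norm_num
    calc Real.sqrt _ ≤ Real.sqrt 1 := Real.sqrt_le_sqrt this
    _ = 1 := Real.sqrt_one
  refine ⟨mem_Cs.2 ⟨hnorm, ?_⟩, ?_⟩ <;> rw [happ 2] <;> simp [hi2.symm]

noncomputable def f2 : E3 →ₗ[ℝ] ℝ := (EuclideanSpace.proj (2 : Fin 3) : E3 →L[ℝ] ℝ).toLinearMap

lemma f2_apply (x : E3) : f2 x = x 2 := rfl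

lemma finrank_ker_f2 : Module.finrank ℝ (LinearMap.ker f2) = 2 := by
  have hsurj : LinearMap.range f2 = ⊤ := by
    rw [LinearMap.range_eq_top]
    intro r
    exact ⟨r • ev 2, by simp [f2_apply, ev, PiLp.smul_apply, EuclideanSpace.single_apply]⟩
  have h := LinearMap.finrank_range_add_finrank_ker f2
  rw [hsurj, finrank_top] at h
  simp [finrank_euclideanSpace_fin] at h
  omega

lemma vectorSpan_Ds_le : vectorSpan ℝ Ds ≤ LinearMap.ker f2 := by
  rw [vectorSpan_def, Submodule.span_le]
  rintro v ⟨x, hx, y, hy, rfl⟩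
  simp only [SetLike.mem_coe, LinearMap.mem_ker, vsub_eq_sub, map_sub, f2_apply]
  rw [hx.2, hy.2, sub_self]

lemma evs_mem_vectorSpan (i : Fin 2) : ev i.castSucc ∈ vectorSpan ℝ Ds := by
  have h := vsub_mem_vectorSpan ℝ (pt_mem_Ds i) cc_mem_Ds
  rw [vsub_eq_sub, add_sub_cancel_left] at h
  have h2 := (vectorSpan ℝ Ds).smul_mem (2:ℝ) h
  rwa [smul_smul, show (2:ℝ) * (1/2) = 1 by norm_num, one_smul] at h2

lemma li : LinearIndependent ℝ (fun i : Fin 2 => ev i.castSucc) :=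
  ((EuclideanSpace.orthonormal_single (ι := Fin 3) (𝕜 := ℝ)).comp
    (fun i : Fin 2 => i.castSucc) (Fin.castSucc_injective _)).linearIndependent

lemma finrank_vectorSpan_Ds : Module.finrank ℝ (vectorSpan ℝ Ds) = 2 := by
  have hle2 : Module.finrank ℝ (vectorSpan ℝ Ds) ≤ 2 :=
    finrank_ker_f2 ▸ Submodule.finrank_mono vectorSpan_Ds_le
  have hspan : Submodule.span ℝ (Set.range fun i : Fin 2 => ev i.castSucc) ≤ vectorSpan ℝ Ds := by
    rw [Submodule.span_le]; rintro v ⟨i, rfl⟩; exact evs_mem_vectorSpan i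
  have h2 : 2 ≤ Module.finrank ℝ (vectorSpan ℝ Ds) := by
    have hc := finrank_span_eq_card li
    calc 2 = Module.finrank ℝ (Submodule.span ℝ (Set.range fun i : Fin 2 => ev i.castSucc)) := by
          simp [hc]
    _ ≤ _ := Submodule.finrank_mono hspan
  omega

lemma exposed_Ds : IsExposed ℝ Cs Ds := by
  intro _
  refine ⟨EuclideanSpace.proj (2 : Fin 3), ?_⟩
  ext x
  constructor
  · rintro ⟨hx, hx2⟩
    exact ⟨hx, fun y hy => by simpa [hx2] using (mem_Cs.1 hy).2⟩
  · rintro ⟨hx, hmax⟩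
    refine ⟨hx, le_antisymm (mem_Cs.1 hx).2 ?_⟩
    have := hmax cc cc_mem_Ds.1
    simpa [cc_mem_Ds.2] using this

lemma extreme_Ds : IsExtreme ℝ Cs Ds := exposed_Ds.isExtreme

lemma span_Cs : affineSpan ℝ Cs = ⊤ := by
  have hsub : ball (0:E3) (1/2) ⊆ Cs := by
    intro x hx
    rw [mem_ball_zero_iff] at hx
    refine mem_Cs.2 ⟨hx.le.trans (by norm_num), ?_⟩
    calc x 2 ≤ |x 2| := le_abs_self _
    _ ≤ ‖x‖ := coord_abs_le_norm x 2
    _ ≤ 1/2 := hx.le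
  have hopen : affineSpan ℝ (ball (0:E3) (1/2)) = ⊤ :=
    isOpen_ball.affineSpan_eq_top (nonempty_ball.2 (by norm_num : (0:ℝ) < 1/2))
  have hmono : affineSpan ℝ (ball (0:E3) (1/2)) ≤ affineSpan ℝ Cs := affineSpan_mono ℝ hsub
  rw [hopen] at hmono
  exact top_unique hmono

lemma dim_Cs : setDim Cs = 3 := by
  unfold setDim
  rw [span_Cs, AffineSubspace.direction_top, finrank_top, finrank_euclideanSpace_fin]

lemma dim_Ds : setDim Ds = 2 := by
  unfold setDim
  rw [direction_affineSpan]
  exact finrank_vectorSpan_Ds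

lemma mem_face_of {C F : Set E3} (hext : IsExtreme ℝ C F) {m : E3} (hm : m ∈ F)
    {d : E3} (hd : d ∈ C) {t : ℝ} (ht : 0 < t) (hz : m + t • (m - d) ∈ C) : d ∈ F := by
  have h1t : (0:ℝ) < 1 + t := by linarith
  have hseg : m ∈ openSegment ℝ d (m + t • (m - d)) :=
    ⟨t / (1 + t), 1 / (1 + t), by positivity, by positivity,
      by rw [← add_div, add_comm]; field_simp,
      by match_scalars <;> field_simp <;> ring⟩
  exact hext.2 hd hz hm hseg

lemma singleton_extreme {p : E3} (hp : ‖p‖ = 1) (hpC : p ∈ Cs) : IsExtreme ℝ Cs {p} := by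
  constructor
  · simpa using hpC
  · rintro x hx y hy z rfl hseg
    rcases eq_or_ne x y with rfl | hne
    · rw [openSegment_same] at hseg
      simp_all
    · exfalso
      obtain ⟨a, b, ha, hb, hab, habz⟩ := hseg
      have := strictConvex_closedBall ℝ (0:E3) 1 hx.1 hy.1 hne ha hb hab
      rw [interior_closedBall _ one_ne_zero, habz, mem_ball_zero_iff, hp] at this
      exact lt_irrefl _ this

lemma no_dim_one : ¬∃ F, IsFace Cs F ∧ setDim F = 1 := by
  rintro ⟨F, ⟨hconv, hext⟩, hdim⟩
  -- F has two distinct points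
  obtain ⟨x, hx, y, hy, hne⟩ : ∃ x ∈ F, ∃ y ∈ F, x ≠ y := by
    by_contra h
    push_neg at h
    have hsub : F.Subsingleton := fun a ha b hb => h a ha b hb
    rcases hsub.eq_empty_or_singleton with rfl | ⟨p, rfl⟩
    · unfold setDim at hdim
      rw [direction_affineSpan, vectorSpan_empty, finrank_bot] at hdim
      exact absurd hdim (by norm_num)
    · unfold setDim at hdim
      rw [direction_affineSpan, vectorSpan_singleton, finrank_bot] at hdim
      exact absurd hdim (by norm_num)
  set m : E3 := (1/2 : ℝ) • x + (1/2 : ℝ) • y with hm_def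
  have hmF : m ∈ F := hconv hx hy (by norm_num) (by norm_num) (by norm_num)
  have hxC := hext.1 hx
  have hyC := hext.1 hy
  have hmnorm : ‖m‖ < 1 := by
    have hsc := strictConvex_closedBall ℝ (0:E3) 1 hxC.1 hyC.1 hne
      (by norm_num : (0:ℝ) < 1/2) (by norm_num : (0:ℝ) < 1/2) (by norm_num)
    rwa [interior_closedBall _ one_ne_zero, ← hm_def, mem_ball_zero_iff] at hsc
  have hm2 : m 2 ≤ 1/2 := (mem_Cs.1 (hext.1 hmF)).2
  by_cases hcase : m 2 = 1/2
  · -- the face contains the disk, so dimension ≥ 2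
    have hDsF : Ds ⊆ F := by
      intro d hd
      set t : ℝ := (1 - ‖m‖)/4 with ht_def
      have ht : 0 < t := by rw [ht_def]; linarith
      apply mem_face_of hext hmF hd.1 ht
      obtain ⟨hd1, _⟩ := mem_Cs.1 hd.1
      refine mem_Cs.2 ⟨?_, ?_⟩
      · have hmd : ‖m - d‖ ≤ 2 := by
          have h := norm_sub_le m d; linarith
        calc ‖m + t • (m - d)‖ ≤ ‖m‖ + ‖t • (m - d)‖ := norm_add_le _ _
        _ = ‖m‖ + t * ‖m - d‖ := by rw [norm_smul, Real.norm_eq_abs, abs_of_pos ht]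
        _ ≤ 1 := by nlinarith
      · have happ : (m + t • (m - d)) 2 = m 2 + t * (m 2 - d 2) := by
          simp [PiLp.add_apply, PiLp.smul_apply, PiLp.sub_apply, smul_eq_mul]
        rw [happ, hcase, hd.2]
        norm_num
    have h21 : (2:ℕ) ≤ 1 := by
      rw [← hdim]
      unfold setDim
      rw [direction_affineSpan]
      calc 2 = Module.finrank ℝ (vectorSpan ℝ Ds) := finrank_vectorSpan_Ds.symm
      _ ≤ _ := Submodule.finrank_mono (vectorSpan_mono ℝ hDsF)
    omega
  · -- the face contains all of Cs, so dimension = 3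
    have hm2lt : m 2 < 1/2 := lt_of_le_of_ne hm2 hcase
    have hCsF : Cs ⊆ F := by
      intro d hd
      set t : ℝ := min ((1 - ‖m‖)/4) ((1/2 - m 2)/4) with ht_def
      have ht : 0 < t := lt_min (by linarith) (by linarith)
      apply mem_face_of hext hmF hd ht
      obtain ⟨hd1, hd2⟩ := mem_Cs.1 hd
      have hd2' : -1 ≤ d 2 := by
        have h1 := (abs_le.1 ((coord_abs_le_norm d 2).trans hd1)).1
        linarith
      refine mem_Cs.2 ⟨?_, ?_⟩
      · have hmd : ‖m - d‖ ≤ 2 := by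
          have h := norm_sub_le m d; linarith
        have htle : t ≤ (1 - ‖m‖)/4 := min_le_left _ _
        calc ‖m + t • (m - d)‖ ≤ ‖m‖ + ‖t • (m - d)‖ := norm_add_le _ _
        _ = ‖m‖ + t * ‖m - d‖ := by rw [norm_smul, Real.norm_eq_abs, abs_of_pos ht]
        _ ≤ 1 := by nlinarith
      · have happ : (m + t • (m - d)) 2 = m 2 + t * (m 2 - d 2) := by
          simp [PiLp.add_apply, PiLp.smul_apply, PiLp.sub_apply, smul_eq_mul]
        have htle : t ≤ (1/2 - m 2)/4 := min_le_right _ _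
        rw [happ]
        nlinarith [mul_le_mul_of_nonneg_left (show m 2 - d 2 ≤ 3/2 by linarith) ht.le,
          mul_le_mul_of_nonneg_right htle (by norm_num : (0:ℝ) ≤ 3/2)]
    have hFeq : F = Cs := subset_antisymm hext.1 hCsF
    rw [hFeq, dim_Cs] at hdim
    exact absurd hdim (by norm_num)

end SlicedBall

theorem sliced_ball_face_dims
    (C : Set (EuclideanSpace ℝ (Fin 3)))
    (hC : C = closedBall 0 1 ∩ {x : EuclideanSpace ℝ (Fin 3) | x 2 ≤ 1 / 2}) :
    (∃ F, IsFace C F ∧ F.Nonempty ∧ setDim F = 0) ∧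
      (∃ F, IsFace C F ∧ setDim F = 2) ∧
      (∃ F, IsFace C F ∧ setDim F = 3) ∧
      ¬∃ F, IsFace C F ∧ setDim F = 1 := by
  open SlicedBall in
  have hCs : C = SlicedBall.Cs := hC
  subst hCs
  refine ⟨?_, ?_, ?_, SlicedBall.no_dim_one⟩
  · -- dimension 0 : an extreme point
    refine ⟨{SlicedBall.ev 0}, ⟨convex_singleton _, ?_⟩, Set.singleton_nonempty _, ?_⟩
    · apply SlicedBall.singleton_extreme
      · rw [SlicedBall.ev, EuclideanSpace.norm_single]; norm_num
      · refine SlicedBall.mem_Cs.2 ⟨?_, ?_⟩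
        · rw [SlicedBall.ev, EuclideanSpace.norm_single]; norm_num
        · rw [SlicedBall.ev]
          rw [show (EuclideanSpace.single (0 : Fin 3) (1:ℝ)) 2 = 0 by
            simp [EuclideanSpace.single_apply]]
          norm_num
    · unfold setDim
      rw [direction_affineSpan, vectorSpan_singleton, finrank_bot]
  · exact ⟨SlicedBall.Ds, ⟨SlicedBall.convex_Ds, SlicedBall.extreme_Ds⟩, SlicedBall.dim_Ds⟩
  · exact ⟨SlicedBall.Cs, ⟨SlicedBall.convex_Cs, IsExtreme.refl ℝ _⟩, SlicedBall.dim_Cs⟩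
end
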